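/- arXiv:math/0703429 — 5 statements merged into one kernel-verified Lean document; each statement's English description precedes it below -/
import Mathlib

section
/- Every compact LOTS is dissipated: if X is a compact LOTS, then for every continuous map g from X to a compact metrizable space Z there exist a compact metrizable space Y and a tight continuous map f : X → Y finer than g. -/
open Set Topology

universe u

section Defs

variable {X Y K Z : Type*}

/-- A subset `S` of a topological space is *scattered* iff every nonempty subset `T ⊆ S`
has a point which is isolated in the subspace topology of `T`. -/
def IsScatteredSet [TopologicalSpace X] (S : Set X) : Prop :=
  ∀ T ⊆ S, T.Nonempty → ∃ x ∈ T, ∃ U : Set X, IsOpen U ∧ U ∩ T = {x}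

/-- A *loose family* for `f : X → Y` : a pairwise disjoint family `Ps` of closed subsets of `X`
such that for some non-scattered `Q ⊆ Y`, `f '' P = Q` for all `P ∈ Ps`. -/
def LooseFamily [TopologicalSpace X] [TopologicalSpace Y] (f : X → Y)
    (Ps : Set (Set X)) : Prop :=
  Ps.Pairwise Disjoint ∧ (∀ P ∈ Ps, IsClosed P) ∧
    ∃ Q : Set Y, ¬ IsScatteredSet Q ∧ ∀ P ∈ Ps, f '' P = Q

/-- `f` is `κ`-*tight* iff there is no loose family for `f` of cardinality `κ`. -/
def IsTightCard [TopologicalSpace X] [TopologicalSpace Y] (κ : Cardinal) (f : X → Y) : Prop :=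
  ¬ ∃ Ps : Set (Set X), LooseFamily f Ps ∧ Cardinal.mk Ps = κ

/-- `f` is *tight* iff it is `2`-tight. -/
def IsTight [TopologicalSpace X] [TopologicalSpace Y] (f : X → Y) : Prop :=
  IsTightCard 2 f

/-- A `K`-*loose function* for `f : X → Y` : a continuous `φ : D → K` with `D` closed in `X`,
such that for some non-scattered `Q ⊆ Y`, `φ(f⁻¹{y} ∩ D) = K` for all `y ∈ Q`. -/
def LooseFunction [TopologicalSpace X] [TopologicalSpace Y] [TopologicalSpace K]
    (f : X → Y) (D : Set X) (φ : X → K) : Prop :=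
  IsClosed D ∧ ContinuousOn φ D ∧
    ∃ Q : Set Y, ¬ IsScatteredSet Q ∧ ∀ y ∈ Q, φ '' (f ⁻¹' {y} ∩ D) = Set.univ

/-- `f` is *weakly c-tight* iff there is no `K`-loose function for `f`
with `K` the Cantor space `2^ω`. -/
def WeaklyCTight [TopologicalSpace X] [TopologicalSpace Y] (f : X → Y) : Prop :=
  ¬ ∃ (D : Set X) (φ : X → (ℕ → Bool)), LooseFunction f D φ

/-- `f` is *finer* than `g` iff `f x₁ = f x₂` implies `g x₁ = g x₂`. -/
def Finer (f : X → Y) (g : X → Z) : Prop :=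
  ∀ x₁ x₂ : X, f x₁ = f x₂ → g x₁ = g x₂

end Defs

/-- `X` is `κ`-*dissipated* iff every continuous map from `X` to a compact metrizable
space is refined by a `κ`-tight continuous map from `X` to a compact metrizable space. -/
def IsDissipatedCard (κ : Cardinal.{u}) (X : Type u) [TopologicalSpace X] : Prop :=
  ∀ (Z : Type u) [TopologicalSpace Z] [CompactSpace Z] [TopologicalSpace.MetrizableSpace Z],
    ∀ g : X → Z, Continuous g →
      ∃ (Y : Type u) (tY : TopologicalSpace Y),
        @CompactSpace Y tY ∧ @TopologicalSpace.MetrizableSpace Y tY ∧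
        ∃ f : X → Y, @Continuous X Y _ tY f ∧ @IsTightCard X Y _ tY κ f ∧ Finer f g

/-- `X` is *weakly c-dissipated* iff every continuous map from `X` to a compact metrizable
space is refined by a weakly c-tight continuous map from `X` to a compact metrizable space. -/
def IsWeaklyCDissipated (X : Type u) [TopologicalSpace X] : Prop :=
  ∀ (Z : Type u) [TopologicalSpace Z] [CompactSpace Z] [TopologicalSpace.MetrizableSpace Z],
    ∀ g : X → Z, Continuous g →
      ∃ (Y : Type u) (tY : TopologicalSpace Y),
        @CompactSpace Y tY ∧ @TopologicalSpace.MetrizableSpace Y tY ∧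
        ∃ f : X → Y, @Continuous X Y _ tY f ∧ @WeaklyCTight X Y _ tY f ∧ Finer f g

namespace Stmt9

set_option linter.unusedSectionVars false

variable {X : Type*} [LinearOrder X] {Z : Type*}

/-- The relation: `g` is constant on the interval between `x` and `y`. -/
def gr (g : X → Z) (x y : X) : Prop := ∀ z ∈ Set.uIcc x y, g z = g x

variable {g : X → Z}

lemma gr_refl (g : X → Z) (x : X) : gr g x x := by
  intro z hz; simp only [uIcc_self, mem_singleton_iff] at hz; rw [hz]

lemma gr_gy {x y : X} (h : gr g x y) : g y = g x := h y right_mem_uIcc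

lemma gr_symm {x y : X} (h : gr g x y) : gr g y x := by
  intro z hz
  rw [uIcc_comm] at hz
  rw [h z hz, gr_gy h]

lemma gr_of_mem {x y z : X} (h : gr g x y) (hz : z ∈ uIcc x y) : gr g x z :=
  fun w hw => h w (uIcc_subset_uIcc left_mem_uIcc hz hw)

lemma gr_trans {x y z : X} (hxy : gr g x y) (hyz : gr g y z) : gr g x z := by
  intro w hw
  rcases (uIcc_subset_uIcc_union_uIcc (b := y)) hw with h | h
  · exact hxy w h
  · rw [hyz w h, gr_gy hxy]

variable (g) in
def gS : Setoid X := ⟨gr g, gr_refl g, gr_symm, gr_trans⟩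

variable (g) in
/-- The quotient of `X` by the convex equivalence relation induced by `g`. -/
def QY := Quotient (gS g)

variable (g) in
def mkq (x : X) : QY g := Quotient.mk (gS g) x

lemma mkq_surjective : Function.Surjective (mkq g) := Quotient.exists_rep

lemma mkq_eq_mkq {x y : X} : mkq g x = mkq g y ↔ gr g x y :=
  ⟨Quotient.exact, fun h => Quotient.sound (s := gS g) h⟩

lemma lt_of_lt_of_not_gr {x y x' y' : X} (hxy : x < y) (hn : ¬ gr g x y)
    (hx : gr g x x') (hy : gr g y y') : x' < y' := by
  by_contra h
  push_neg at h
  rcases le_or_gt y' x with h1 | h2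
  · refine hn (gr_symm (gr_of_mem hy ?_))
    rw [uIcc_of_ge (le_of_lt (lt_of_le_of_lt h1 hxy))]
    exact ⟨h1, le_of_lt hxy⟩
  · have hxy' : gr g x y' := gr_of_mem hx (by
      rw [uIcc_of_le (le_trans (le_of_lt h2) h)]
      exact ⟨le_of_lt h2, h⟩)
    exact hn (gr_trans hxy' (gr_symm hy))

lemma le_rel_iff {a b c d : X} (hac : gr g a c) (hbd : gr g b d) :
    (a ≤ b ∨ gr g a b) ↔ (c ≤ d ∨ gr g c d) := by
  suffices H : ∀ a b c d : X, gr g a c → gr g b d → (a ≤ b ∨ gr g a b) → (c ≤ d ∨ gr g c d) from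
    ⟨H a b c d hac hbd, H c d a b (gr_symm hac) (gr_symm hbd)⟩
  clear hac hbd a b c d
  intro a b c d hac hbd h
  by_cases hcd : gr g c d
  · exact Or.inr hcd
  · left
    by_contra hle
    push_neg at hle
    rcases h with h | h
    · by_cases hab : gr g a b
      · exact hcd (gr_trans (gr_trans (gr_symm hac) hab) hbd)
      · rcases lt_or_eq_of_le h with h' | rfl
        · exact absurd (lt_of_lt_of_not_gr h' hab hac hbd) (not_lt_of_gt hle)
        · exact hab (gr_refl g a)
    · exact hcd (gr_trans (gr_trans (gr_symm hac) h) hbd)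

noncomputable instance : LinearOrder (QY g) where
  le a b := Quotient.liftOn₂ a b (fun x y => x ≤ y ∨ gr g x y)
    (fun _ _ _ _ hac hbd => propext (le_rel_iff hac hbd))
  le_refl a := Quotient.inductionOn a fun x => Or.inr (gr_refl g x)
  le_trans a b c := Quotient.inductionOn₃ a b c (by
    intro x y z hxy hyz
    show x ≤ z ∨ gr g x z
    by_cases hxz : gr g x z
    · exact Or.inr hxz
    · left
      by_contra hlt
      push_neg at hlt
      rcases hxy with h1 | h1 <;> rcases hyz with h2 | h2
      · exact absurd (le_trans h1 h2) (not_le_of_gt hlt)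
      · -- x ≤ y, gr y z, z < x : so z < x ≤ y, x ∈ uIcc y z
        have hyx : gr g y x := gr_of_mem h2 (by
          rw [uIcc_of_ge (le_of_lt (lt_of_lt_of_le hlt h1))]
          exact ⟨le_of_lt hlt, h1⟩)
        exact hxz (gr_trans (gr_symm hyx) h2)
      · -- gr x y, y ≤ z, z < x : y ≤ z < x, z ∈ uIcc x y
        exact hxz (gr_of_mem h1 (by
          rw [uIcc_of_ge (le_trans h2 (le_of_lt hlt))]
          exact ⟨h2, le_of_lt hlt⟩))
      · exact hxz (gr_trans h1 h2))
  le_antisymm a b := Quotient.inductionOn₂ a b (by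
    intro x y hxy hyx
    apply Quotient.sound
    show gr g x y
    rcases hxy with h1 | h1
    · rcases hyx with h2 | h2
      · rw [le_antisymm h1 h2]; exact gr_refl g y
      · exact gr_symm h2
    · exact h1)
  le_total a b := Quotient.inductionOn₂ a b (by
    intro x y
    rcases le_total x y with h | h
    · exact Or.inl (Or.inl h)
    · exact Or.inr (Or.inl h))
  toDecidableLE := fun _ _ => Classical.propDecidable _

lemma mkq_le_mkq {x y : X} : mkq g x ≤ mkq g y ↔ (x ≤ y ∨ gr g x y) := Iff.rfl

lemma mkq_le_of_le {x y : X} (h : x ≤ y) : mkq g x ≤ mkq g y := Or.inl h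

lemma lt_of_mkq_lt {x y : X} (h : mkq g x < mkq g y) : x < y := by
  rw [lt_iff_le_not_ge] at h
  obtain ⟨h1, h2⟩ := h
  rw [mkq_le_mkq] at h1
  rw [mkq_le_mkq] at h2
  push_neg at h2
  rcases h1 with h1 | h1
  · exact lt_of_le_of_ne h1 (fun h => h2.2 (h ▸ gr_refl g y))
  · exact absurd (gr_symm h1) h2.2

lemma mkq_lt_mkq {x y : X} : mkq g x < mkq g y ↔ (x < y ∧ ¬ gr g x y) := by
  constructor
  · intro h
    refine ⟨lt_of_mkq_lt h, fun hgr => absurd (Quotient.sound hgr : mkq g x = mkq g y) h.ne⟩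
  · rintro ⟨h1, h2⟩
    refine lt_of_le_of_ne (mkq_le_of_le h1.le) (fun h => h2 (Quotient.exact h))


section Topology

variable [TopologicalSpace X] [OrderTopology X] [TopologicalSpace Z] [T1Space Z]

variable (g) in
/-- The equivalence class of `q` as a subset of `X`. -/
def cls (q : QY g) : Set X := {x | mkq g x = q}

lemma mem_cls_mkq (x : X) : x ∈ cls g (mkq g x) := rfl

lemma cls_nonempty (q : QY g) : (cls g q).Nonempty := by
  obtain ⟨x, hx⟩ := mkq_surjective (g := g) q
  exact ⟨x, hx⟩

lemma gr_of_mem_cls {q : QY g} {x y : X} (hx : x ∈ cls g q) (hy : y ∈ cls g q) : gr g x y :=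
  Quotient.exact (hx.trans hy.symm)

lemma mem_cls_of_gr {q : QY g} {x y : X} (hx : x ∈ cls g q) (h : gr g x y) : y ∈ cls g q := by
  have : mkq g y = mkq g x := mkq_eq_mkq.mpr (gr_symm h)
  exact this.trans hx

lemma cls_convex {q : QY g} {a b c : X} (ha : a ∈ cls g q) (hb : b ∈ cls g q)
    (hc : c ∈ Icc a b) : c ∈ cls g q := by
  have hab : gr g a b := gr_of_mem_cls ha hb
  refine mem_cls_of_gr ha (gr_of_mem hab ?_)
  rw [uIcc_of_le (hc.1.trans hc.2)]
  exact hc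

lemma isClosed_cls (hg : Continuous g) (q : QY g) : IsClosed (cls g q) := by
  rw [← isOpen_compl_iff, isOpen_iff_mem_nhds]
  intro y hy
  obtain ⟨x, hx⟩ := cls_nonempty (g := g) q
  have hnr : ¬ gr g y x := fun h => hy (mem_cls_of_gr hx (gr_symm h))
  by_cases hgy : g y = g x
  · rw [gr] at hnr; push_neg at hnr
    obtain ⟨z, hz1, hz2⟩ := hnr
    have hyx : y ≠ x := by
      rintro rfl
      rw [uIcc_self, mem_singleton_iff] at hz1
      exact hz2 (by rw [hz1])
    have hzy : z ≠ y := fun h => hz2 (by rw [h])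
    have hzx : z ≠ x := fun h => hz2 (by rw [h, hgy])
    rcases hyx.lt_or_gt with h | h
    · rw [uIcc_of_le h.le] at hz1
      have hyz : y < z := lt_of_le_of_ne hz1.1 (Ne.symm hzy)
      have hzx' : z < x := lt_of_le_of_ne hz1.2 hzx
      refine Filter.mem_of_superset (IsOpen.mem_nhds isOpen_Iio hyz) ?_
      intro w hw hwc
      have hwx : gr g w x := gr_of_mem_cls hwc hx
      have : gr g w z := gr_of_mem hwx (by
        rw [uIcc_of_le (le_of_lt (lt_trans hw hzx'))]
        exact ⟨le_of_lt hw, le_of_lt hzx'⟩)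
      have hgw : g x = g w := gr_gy hwx
      exact hz2 (by rw [gr_gy this, ← hgw, hgy])
    · rw [uIcc_of_ge h.le] at hz1
      have hxz : x < z := lt_of_le_of_ne hz1.1 (Ne.symm hzx)
      have hzy' : z < y := lt_of_le_of_ne hz1.2 hzy
      refine Filter.mem_of_superset (IsOpen.mem_nhds isOpen_Ioi hzy') ?_
      intro w hw hwc
      have hwx : gr g w x := gr_of_mem_cls hwc hx
      have : gr g w z := gr_of_mem hwx (by
        rw [uIcc_of_ge (le_of_lt (lt_trans hxz hw))]
        exact ⟨le_of_lt hxz, le_of_lt hw⟩)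
      have hgw : g x = g w := gr_gy hwx
      exact hz2 (by rw [gr_gy this, ← hgw, hgy])
  · refine Filter.mem_of_superset
      (IsOpen.mem_nhds (((isClosed_singleton (x := g x)).isOpen_compl).preimage hg) hgy) ?_
    intro w hw hwc
    exact hw (gr_gy (gr_of_mem_cls hwc hx)).symm

noncomputable instance : TopologicalSpace (QY g) := Preorder.topology _

instance : OrderTopology (QY g) := ⟨rfl⟩

variable [Nonempty X]

variable (g) in
noncomputable def cmin (q : QY g) : X := Classical.epsilon (IsLeast (cls g q))

variable (g) in
noncomputable def cmax (q : QY g) : X := Classical.epsilon (IsGreatest (cls g q))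

variable [CompactSpace X]

lemma isLeast_cmin (hg : Continuous g) (q : QY g) : IsLeast (cls g q) (cmin g q) := by
  have h : ∃ x, IsLeast (cls g q) x :=
    ((isClosed_cls hg q).isCompact).exists_isLeast (cls_nonempty q)
  unfold cmin
  exact Classical.epsilon_spec h

lemma isGreatest_cmax (hg : Continuous g) (q : QY g) : IsGreatest (cls g q) (cmax g q) := by
  have h : ∃ x, IsGreatest (cls g q) x :=
    ((isClosed_cls hg q).isCompact).exists_isGreatest (cls_nonempty q)
  unfold cmax
  exact Classical.epsilon_spec h

lemma cls_eq_Icc (hg : Continuous g) (q : QY g) :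
    cls g q = Icc (cmin g q) (cmax g q) := by
  ext w
  constructor
  · intro hw
    exact ⟨(isLeast_cmin hg q).2 hw, (isGreatest_cmax hg q).2 hw⟩
  · intro hw
    exact cls_convex (isLeast_cmin hg q).1 (isGreatest_cmax hg q).1 hw

lemma continuous_mkq (hg : Continuous g) : Continuous (mkq g) := by
  apply continuous_generateFrom_iff.mpr
  rintro s ⟨a, rfl | rfl⟩
  · have : mkq g ⁻¹' Ioi a = Ioi (cmax g a) := by
      ext w
      simp only [mem_preimage, mem_Ioi]
      constructor
      · intro h
        have := lt_of_mkq_lt (g := g) (x := cmax g a) (y := w) ?_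
        · exact this
        · rw [show mkq g (cmax g a) = a from (isGreatest_cmax hg a).1]
          exact h
      · intro h
        refine lt_of_le_of_ne ?_ ?_
        · rw [show a = mkq g (cmax g a) from ((isGreatest_cmax hg a).1 : _).symm]
          exact mkq_le_of_le h.le
        · intro heq
          exact absurd ((isGreatest_cmax hg a).2 (heq ▸ mem_cls_mkq w : w ∈ cls g a)) (not_le_of_gt h)
    show IsOpen (mkq g ⁻¹' Ioi a)
    rw [this]
    exact isOpen_Ioi
  · have : mkq g ⁻¹' Iio a = Iio (cmin g a) := by
      ext w
      simp only [mem_preimage, mem_Iio]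
      constructor
      · intro h
        have := lt_of_mkq_lt (g := g) (x := w) (y := cmin g a) ?_
        · exact this
        · rw [show mkq g (cmin g a) = a from (isLeast_cmin hg a).1]
          exact h
      · intro h
        refine lt_of_le_of_ne ?_ ?_
        · rw [show a = mkq g (cmin g a) from ((isLeast_cmin hg a).1 : _).symm]
          exact mkq_le_of_le h.le
        · intro heq
          exact absurd ((isLeast_cmin hg a).2 (heq ▸ mem_cls_mkq w : w ∈ cls g a)) (not_le_of_gt h)
    show IsOpen (mkq g ⁻¹' Iio a)
    rw [this]
    exact isOpen_Iio

lemma compactSpace_QY (hg : Continuous g) : CompactSpace (QY g) := by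
  constructor
  have : (univ : Set (QY g)) = mkq g '' univ := by
    rw [image_univ]
    exact (Set.range_eq_univ.mpr mkq_surjective).symm
  rw [this]
  exact isCompact_univ.image (continuous_mkq hg)


variable (g) in
noncomputable def gbar : QY g → Z := Quotient.lift g (fun _ _ h => (gr_gy h).symm)

lemma gbar_mkq (x : X) : gbar g (mkq g x) = g x := rfl

lemma mkq_out (w : QY g) : mkq g (Quotient.out w) = w := Quotient.out_eq w

lemma gbar_out (w : QY g) : g (Quotient.out w) = gbar g w :=
  (gbar_mkq (Quotient.out w)).symm.trans (congrArg (gbar g) (mkq_out w))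


lemma isOpen_image_mkq (hg : Continuous g) {U : Set X} (hU : IsOpen U)
    (hsat : ∀ q : QY g, ∀ x ∈ U, x ∈ cls g q → cls g q ⊆ U) : IsOpen (mkq g '' U) := by
  rw [isOpen_iff_mem_nhds]
  rintro y ⟨x, hxU, rfl⟩
  set q := mkq g x with hq
  have hclsU : cls g q ⊆ U := hsat q x hxU (mem_cls_mkq x)
  set c₁ := cmin g q with hc1
  set c₂ := cmax g q with hc2
  have hc₁ : c₁ ∈ cls g q := (isLeast_cmin hg q).1
  have hc₂ : c₂ ∈ cls g q := (isGreatest_cmax hg q).1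
  have hIcc : Icc c₁ c₂ ⊆ U := by rw [← cls_eq_Icc hg q]; exact hclsU
  have hqc₁ : mkq g c₁ = q := hc₁
  have hqc₂ : mkq g c₂ = q := hc₂
  by_cases hl : ∃ l, l < c₁ <;> by_cases hr : ∃ r, c₂ < r
  · -- both sides
    obtain ⟨l, hl1, hl2⟩ := exists_Ioc_subset_of_mem_nhds (hU.mem_nhds (hclsU hc₁)) hl
    obtain ⟨r, hr1, hr2⟩ := exists_Ico_subset_of_mem_nhds (hU.mem_nhds (hclsU hc₂)) hr
    have hIoo : Ioo l r ⊆ U := by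
      intro z hz
      rcases le_or_gt z c₁ with h | h
      · exact hl2 ⟨hz.1, h⟩
      rcases le_or_gt c₂ z with h' | h'
      · exact hr2 ⟨h', hz.2⟩
      · exact hIcc ⟨h.le, h'.le⟩
    have hlq : mkq g l < q := by
      rw [← hqc₁]
      refine lt_of_le_of_ne (mkq_le_of_le hl1.le) (fun he => ?_)
      exact absurd ((isLeast_cmin hg q).2 (show l ∈ cls g q from hqc₁ ▸ he)) (not_le_of_gt hl1)
    have hqr : q < mkq g r := by
      rw [← hqc₂]
      refine lt_of_le_of_ne (mkq_le_of_le hr1.le) (fun he => ?_)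
      exact absurd ((isGreatest_cmax hg q).2 (show r ∈ cls g q from hqc₂ ▸ he.symm))
        (not_le_of_gt hr1)
    refine Filter.mem_of_superset (isOpen_Ioo.mem_nhds ⟨hlq, hqr⟩) ?_
    rintro w ⟨hw1, hw2⟩
    refine ⟨Quotient.out w, hIoo ⟨?_, ?_⟩, mkq_out w⟩
    · exact lt_of_mkq_lt (g := g) (by rw [mkq_out]; exact hw1)
    · exact lt_of_mkq_lt (g := g) (by rw [mkq_out]; exact hw2)
  · -- only left
    push_neg at hr
    obtain ⟨l, hl1, hl2⟩ := exists_Ioc_subset_of_mem_nhds (hU.mem_nhds (hclsU hc₁)) hl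
    have hIoc : Ioc l c₂ ⊆ U := by
      intro z hz
      rcases le_or_gt z c₁ with h | h
      · exact hl2 ⟨hz.1, h⟩
      · exact hIcc ⟨h.le, hz.2⟩
    have hlq : mkq g l < q := by
      rw [← hqc₁]
      refine lt_of_le_of_ne (mkq_le_of_le hl1.le) (fun he => ?_)
      exact absurd ((isLeast_cmin hg q).2 (show l ∈ cls g q from hqc₁ ▸ he)) (not_le_of_gt hl1)
    refine Filter.mem_of_superset (isOpen_Ioi.mem_nhds hlq) ?_
    intro w hw
    refine ⟨Quotient.out w, hIoc ⟨?_, hr _⟩, mkq_out w⟩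
    exact lt_of_mkq_lt (g := g) (by rw [mkq_out]; exact hw)
  · -- only right
    push_neg at hl
    obtain ⟨r, hr1, hr2⟩ := exists_Ico_subset_of_mem_nhds (hU.mem_nhds (hclsU hc₂)) hr
    have hIco : Ico c₁ r ⊆ U := by
      intro z hz
      rcases le_or_gt c₂ z with h | h
      · exact hr2 ⟨h, hz.2⟩
      · exact hIcc ⟨hz.1, h.le⟩
    have hqr : q < mkq g r := by
      rw [← hqc₂]
      refine lt_of_le_of_ne (mkq_le_of_le hr1.le) (fun he => ?_)
      exact absurd ((isGreatest_cmax hg q).2 (show r ∈ cls g q from hqc₂ ▸ he.symm))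
        (not_le_of_gt hr1)
    refine Filter.mem_of_superset (isOpen_Iio.mem_nhds hqr) ?_
    intro w hw
    refine ⟨Quotient.out w, hIco ⟨hl _, ?_⟩, mkq_out w⟩
    exact lt_of_mkq_lt (g := g) (by rw [mkq_out]; exact hw)
  · -- neither
    push_neg at hl hr
    refine Filter.mem_of_superset (isOpen_univ.mem_nhds (mem_univ _)) ?_
    intro w _
    exact ⟨Quotient.out w, hIcc ⟨hl _, hr _⟩, mkq_out w⟩

lemma continuous_gbar (hg : Continuous g) : Continuous (gbar g) := by
  rw [continuous_def]
  intro V hV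
  have himg : gbar g ⁻¹' V = mkq g '' (g ⁻¹' V) := by
    ext w
    constructor
    · intro hw
      refine ⟨Quotient.out w, ?_, mkq_out w⟩
      rw [mem_preimage, gbar_out w]
      exact hw
    · rintro ⟨x, hx, rfl⟩
      exact hx
  rw [himg]
  refine isOpen_image_mkq hg (hV.preimage hg) ?_
  intro q x hxU hxcls z hz
  have : gr g z x := gr_of_mem_cls hz hxcls
  rw [mem_preimage, gr_gy (gr_symm this)]
  exact hxU

lemma exists_isLUB'' {s : Set X} (hs : s.Nonempty) : ∃ a, IsLUB s a := by
  obtain ⟨a, haG⟩ := (isClosed_closure (s := s)).isCompact.exists_isGreatest hs.closure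
  refine ⟨a, fun x hx => haG.2 (subset_closure hx), fun b hb => ?_⟩
  exact closure_minimal (fun x hx => hb hx) isClosed_Iic haG.1

lemma exists_isGLB'' {s : Set X} (hs : s.Nonempty) : ∃ a, IsGLB s a := by
  obtain ⟨a, haL⟩ := (isClosed_closure (s := s)).isCompact.exists_isLeast hs.closure
  refine ⟨a, fun x hx => haL.2 (subset_closure hx), fun b hb => ?_⟩
  exact closure_minimal (fun x hx => hb hx) isClosed_Ici haL.1

lemma core_mono {P₁ P₂ : Set X} (h1 : IsClosed P₁) (h2 : IsClosed P₂) (hd : Disjoint P₁ P₂)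
    {fib : ℕ → Set X} (hne1 : ∀ n, (P₁ ∩ fib n).Nonempty) (hne2 : ∀ n, (P₂ ∩ fib n).Nonempty)
    (hstack : ∀ n m, n < m → ∀ a ∈ fib n, ∀ b ∈ fib m, a < b) : False := by
  choose u hu using hne1
  choose v hv using hne2
  have hmu : StrictMono u := fun n m h => hstack n m h _ (hu n).2 _ (hu m).2
  have hmv : StrictMono v := fun n m h => hstack n m h _ (hv n).2 _ (hv m).2
  obtain ⟨s, hs⟩ := exists_isLUB'' (range_nonempty u)
  obtain ⟨s', hs'⟩ := exists_isLUB'' (range_nonempty v)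
  have hss : s = s' := by
    refine le_antisymm (hs.2 ?_) (hs'.2 ?_)
    · rintro x ⟨n, rfl⟩
      exact le_of_lt (lt_of_lt_of_le
        (hstack n (n+1) (Nat.lt_succ_self n) _ (hu n).2 _ (hv (n+1)).2)
        (hs'.1 (mem_range_self (n+1))))
    · rintro x ⟨n, rfl⟩
      exact le_of_lt (lt_of_lt_of_le
        (hstack n (n+1) (Nat.lt_succ_self n) _ (hv n).2 _ (hu (n+1)).2)
        (hs.1 (mem_range_self (n+1))))
  have ht1 : Filter.Tendsto u Filter.atTop (nhds s) := tendsto_atTop_isLUB hmu.monotone hs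
  have ht2 : Filter.Tendsto v Filter.atTop (nhds s') := tendsto_atTop_isLUB hmv.monotone hs'
  have hm1 : s ∈ P₁ := h1.mem_of_tendsto ht1 (Filter.Eventually.of_forall fun n => (hu n).1)
  have hm2 : s' ∈ P₂ := h2.mem_of_tendsto ht2 (Filter.Eventually.of_forall fun n => (hv n).1)
  rw [← hss] at hm2
  exact Set.disjoint_left.mp hd hm1 hm2

lemma core_anti {P₁ P₂ : Set X} (h1 : IsClosed P₁) (h2 : IsClosed P₂) (hd : Disjoint P₁ P₂)
    {fib : ℕ → Set X} (hne1 : ∀ n, (P₁ ∩ fib n).Nonempty) (hne2 : ∀ n, (P₂ ∩ fib n).Nonempty)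
    (hstack : ∀ n m, n < m → ∀ a ∈ fib n, ∀ b ∈ fib m, b < a) : False := by
  choose u hu using hne1
  choose v hv using hne2
  have hmu : StrictAnti u := fun n m h => hstack n m h _ (hu n).2 _ (hu m).2
  have hmv : StrictAnti v := fun n m h => hstack n m h _ (hv n).2 _ (hv m).2
  obtain ⟨s, hs⟩ := exists_isGLB'' (range_nonempty u)
  obtain ⟨s', hs'⟩ := exists_isGLB'' (range_nonempty v)
  have hss : s = s' := by
    refine le_antisymm ?_ ?_
    · refine hs'.2 ?_
      rintro x ⟨n, rfl⟩
      exact le_of_lt (lt_of_le_of_lt (hs.1 (mem_range_self (n+1)))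
        (hstack n (n+1) (Nat.lt_succ_self n) _ (hv n).2 _ (hu (n+1)).2))
    · refine hs.2 ?_
      rintro x ⟨n, rfl⟩
      exact le_of_lt (lt_of_le_of_lt (hs'.1 (mem_range_self (n+1)))
        (hstack n (n+1) (Nat.lt_succ_self n) _ (hu n).2 _ (hv (n+1)).2))
  have ht1 : Filter.Tendsto u Filter.atTop (nhds s) := tendsto_atTop_isGLB hmu.antitone hs
  have ht2 : Filter.Tendsto v Filter.atTop (nhds s') := tendsto_atTop_isGLB hmv.antitone hs'
  have hm1 : s ∈ P₁ := h1.mem_of_tendsto ht1 (Filter.Eventually.of_forall fun n => (hu n).1)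
  have hm2 : s' ∈ P₂ := h2.mem_of_tendsto ht2 (Filter.Eventually.of_forall fun n => (hv n).1)
  rw [← hss] at hm2
  exact Set.disjoint_left.mp hd hm1 hm2

end Topology

lemma exists_strictMono_or_strictAnti {α : Type*} [LinearOrder α] (u : ℕ → α)
    (hu : Function.Injective u) :
    ∃ φ : ℕ → ℕ, StrictMono φ ∧ (StrictMono (u ∘ φ) ∨ StrictAnti (u ∘ φ)) := by
  haveI : IsTrans α (· < ·) := ⟨fun _ _ _ => lt_trans⟩
  obtain ⟨φ, h⟩ := exists_increasing_or_nonincreasing_subseq (· < ·) u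
  refine ⟨⇑φ, φ.strictMono, ?_⟩
  rcases h with h | h
  · exact Or.inl (fun m n hmn => h m n hmn)
  · refine Or.inr (fun m n hmn => ?_)
    have h1 := h m n hmn
    have hne : u (φ n) ≠ u (φ m) := fun he => (Nat.lt_irrefl m) (by
      have := φ.injective (hu he)
      omega)
    exact lt_of_le_of_ne (not_lt.mp h1) hne


section Jumps

variable [TopologicalSpace X] [OrderTopology X] [CompactSpace X] [Nonempty X]
variable [TopologicalSpace Z] [TopologicalSpace.MetrizableSpace Z]

lemma succ_unique {x y y' : X} (h1 : x < y) (h2 : Ioo x y = ∅) (h3 : x < y')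
    (h4 : Ioo x y' = ∅) : y = y' := by
  by_contra hne
  rcases (Ne.lt_or_gt hne) with h | h
  · exact (eq_empty_iff_forall_notMem.mp h4 y) ⟨h1, h⟩
  · exact (eq_empty_iff_forall_notMem.mp h2 y') ⟨h3, h⟩

lemma countable_jump_pairs (hg : Continuous g) :
    {p : X × X | p.1 < p.2 ∧ Ioo p.1 p.2 = ∅ ∧ g p.1 ≠ g p.2}.Countable := by
  letI : MetricSpace Z := TopologicalSpace.metrizableSpaceMetric Z
  have main : ∀ n : ℕ,
      {p : X × X | p.1 < p.2 ∧ Ioo p.1 p.2 = ∅ ∧ 1/((n:ℝ)+1) ≤ dist (g p.1) (g p.2)}.Finite := by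
    intro n
    by_contra hinf
    have e := Set.Infinite.natEmbedding _ hinf
    set w : ℕ → X × X := fun k => (e k : X × X) with hw
    have hwmem : ∀ k, (w k).1 < (w k).2 ∧ Ioo (w k).1 (w k).2 = ∅ ∧
        1/((n:ℝ)+1) ≤ dist (g (w k).1) (g (w k).2) := fun k => (e k).2
    have hwinj : Function.Injective w := fun a b h => e.injective (Subtype.ext h)
    have hfinj : Function.Injective (fun k => (w k).1) := by
      intro p q h
      simp only at h
      apply hwinj
      have h2 := succ_unique (hwmem p).1 (hwmem p).2.1 (h ▸ (hwmem q).1) (h ▸ (hwmem q).2.1)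
      exact Prod.ext h h2
    obtain ⟨φ, hφ, hcase⟩ := exists_strictMono_or_strictAnti _ hfinj
    set a : ℕ → X := fun k => (w (φ k)).1 with ha
    set b : ℕ → X := fun k => (w (φ k)).2 with hb
    have hab : ∀ k, a k < b k := fun k => (hwmem (φ k)).1
    have hIoo : ∀ k, Ioo (a k) (b k) = ∅ := fun k => (hwmem (φ k)).2.1
    have hdist : ∀ k, 1/((n:ℝ)+1) ≤ dist (g (a k)) (g (b k)) := fun k => (hwmem (φ k)).2.2
    have hpos : (0:ℝ) < 1/((n:ℝ)+1) := by positivity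
    rcases hcase with hmono | hanti
    · have hba : ∀ k, b k ≤ a (k+1) := by
        intro k
        by_contra hlt
        push_neg at hlt
        exact (eq_empty_iff_forall_notMem.mp (hIoo k) (a (k+1)))
          ⟨hmono (Nat.lt_succ_self k), hlt⟩
      obtain ⟨s, hs⟩ := exists_isLUB'' (range_nonempty a)
      have hta : Filter.Tendsto a Filter.atTop (nhds s) := tendsto_atTop_isLUB hmono.monotone hs
      have hta' : Filter.Tendsto (fun k => a (k+1)) Filter.atTop (nhds s) :=
        (Filter.tendsto_add_atTop_iff_nat 1).mpr hta
      have htb : Filter.Tendsto b Filter.atTop (nhds s) :=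
        tendsto_of_tendsto_of_tendsto_of_le_of_le hta hta' (fun k => (hab k).le) hba
      have hd : Filter.Tendsto (fun k => dist (g (a k)) (g (b k))) Filter.atTop
          (nhds (dist (g s) (g s))) :=
        ((hg.tendsto s).comp hta).dist ((hg.tendsto s).comp htb)
      rw [dist_self] at hd
      obtain ⟨k, hk⟩ := (hd.eventually (gt_mem_nhds hpos)).exists
      exact absurd (hdist k) (not_le.mpr hk)
    · have hba : ∀ k, b (k+1) ≤ a k := by
        intro k
        by_contra hlt
        push_neg at hlt
        exact (eq_empty_iff_forall_notMem.mp (hIoo (k+1)) (a k))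
          ⟨hanti (Nat.lt_succ_self k), hlt⟩
      obtain ⟨s, hs⟩ := exists_isGLB'' (range_nonempty a)
      have hta : Filter.Tendsto a Filter.atTop (nhds s) := tendsto_atTop_isGLB hanti.antitone hs
      have hta' : Filter.Tendsto (fun k => a (k+1)) Filter.atTop (nhds s) :=
        (Filter.tendsto_add_atTop_iff_nat 1).mpr hta
      have htb : Filter.Tendsto (fun k => b (k+1)) Filter.atTop (nhds s) :=
        tendsto_of_tendsto_of_tendsto_of_le_of_le hta' hta (fun k => (hab (k+1)).le) hba
      have hd : Filter.Tendsto (fun k => dist (g (a (k+1))) (g (b (k+1)))) Filter.atTop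
          (nhds (dist (g s) (g s))) :=
        ((hg.tendsto s).comp hta').dist ((hg.tendsto s).comp htb)
      rw [dist_self] at hd
      obtain ⟨k, hk⟩ := (hd.eventually (gt_mem_nhds hpos)).exists
      exact absurd (hdist (k+1)) (not_le.mpr hk)
  have hsub : {p : X × X | p.1 < p.2 ∧ Ioo p.1 p.2 = ∅ ∧ g p.1 ≠ g p.2} ⊆
      ⋃ n : ℕ, {p : X × X | p.1 < p.2 ∧ Ioo p.1 p.2 = ∅ ∧
        1/((n:ℝ)+1) ≤ dist (g p.1) (g p.2)} := by
    intro p hp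
    have hdp : 0 < dist (g p.1) (g p.2) := dist_pos.mpr hp.2.2
    obtain ⟨n, hn⟩ := exists_nat_one_div_lt hdp
    exact mem_iUnion.mpr ⟨n, hp.1, hp.2.1, hn.le⟩
  exact (Set.countable_iUnion fun n => (main n).countable).mono hsub

lemma countable_jumpsL (hg : Continuous g) :
    {x : X | ∃ y, x < y ∧ Ioo x y = ∅ ∧ g x ≠ g y}.Countable := by
  refine ((countable_jump_pairs hg).image Prod.fst).mono ?_
  rintro x ⟨y, h⟩
  exact ⟨(x, y), h, rfl⟩

lemma countable_jumpsR (hg : Continuous g) :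
    {y : X | ∃ x, x < y ∧ Ioo x y = ∅ ∧ g x ≠ g y}.Countable := by
  refine ((countable_jump_pairs hg).image Prod.snd).mono ?_
  rintro y ⟨x, h⟩
  exact ⟨(x, y), h, rfl⟩

end Jumps


section SecondCountable

variable [TopologicalSpace X] [OrderTopology X] [CompactSpace X] [Nonempty X]
variable [TopologicalSpace Z] [T1Space Z] [TopologicalSpace.MetrizableSpace Z]

lemma key_nonconst {w w' : QY g} (h : w < w') :
    ∃ c, w < c ∧ c ≤ w' ∧ gbar g c ≠ gbar g w := by
  have hlt : mkq g (Quotient.out w) < mkq g (Quotient.out w') := by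
    rw [mkq_out, mkq_out]; exact h
  obtain ⟨hab, hnr⟩ := mkq_lt_mkq.mp hlt
  rw [gr] at hnr
  push_neg at hnr
  obtain ⟨z, hz1, hz2⟩ := hnr
  rw [uIcc_of_le hab.le] at hz1
  refine ⟨mkq g z, ?_, ?_, ?_⟩
  · refine lt_of_le_of_ne ?_ (fun he => hz2 ?_)
    · rw [← mkq_out (g := g) w]
      exact mkq_le_of_le hz1.1
    · rw [show g z = gbar g (mkq g z) from rfl, ← he, ← gbar_out]
  · rw [← mkq_out (g := g) w']
    exact mkq_le_of_le hz1.2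
  · intro he
    exact hz2 ((show g z = gbar g w from he).trans (gbar_out w).symm)

lemma key_nonconst' {w w' : QY g} (h : w < w') :
    ∃ c, w ≤ c ∧ c < w' ∧ gbar g c ≠ gbar g w' := by
  have hlt : mkq g (Quotient.out w) < mkq g (Quotient.out w') := by
    rw [mkq_out, mkq_out]; exact h
  obtain ⟨hab, hnr⟩ := mkq_lt_mkq.mp hlt
  have hnr' : ¬ gr g (Quotient.out w') (Quotient.out w) := fun hh => hnr (gr_symm hh)
  rw [gr] at hnr'
  push_neg at hnr'
  obtain ⟨z, hz1, hz2⟩ := hnr'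
  rw [uIcc_of_ge hab.le] at hz1
  refine ⟨mkq g z, ?_, ?_, ?_⟩
  · rw [← mkq_out (g := g) w]
    exact mkq_le_of_le hz1.1
  · refine lt_of_le_of_ne ?_ (fun he => hz2 ?_)
    · rw [← mkq_out (g := g) w']
      exact mkq_le_of_le hz1.2
    · rw [show g z = gbar g (mkq g z) from rfl, he, ← gbar_out]
  · intro he
    exact hz2 (by rw [show g z = gbar g (mkq g z) from rfl, he, ← gbar_out])

lemma secondCountable_QY (hg : Continuous g) : SecondCountableTopology (QY g) := by
  letI : MetricSpace Z := TopologicalSpace.metrizableSpaceMetric Z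
  haveI : CompactSpace (QY g) := compactSpace_QY hg
  have hgb : Continuous (gbar g) := continuous_gbar hg
  classical
  set JL : Set (QY g) := {p | ∃ q, p < q ∧ Ioo p q = ∅} with hJL_def
  set JR : Set (QY g) := {q | ∃ p, p < q ∧ Ioo p q = ∅} with hJR_def
  have hjump : ∀ p q : QY g, p < q → Ioo p q = ∅ →
      cmax g p < cmin g q ∧ Ioo (cmax g p) (cmin g q) = ∅ ∧ g (cmax g p) ≠ g (cmin g q) := by
    intro p q hpq hIoo
    have hq1 : mkq g (cmax g p) = p := (isGreatest_cmax hg p).1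
    have hq2 : mkq g (cmin g q) = q := (isLeast_cmin hg q).1
    have h1 : cmax g p < cmin g q := lt_of_mkq_lt (g := g) (by rw [hq1, hq2]; exact hpq)
    have h2 : Ioo (cmax g p) (cmin g q) = ∅ := by
      rw [eq_empty_iff_forall_notMem]
      rintro z ⟨hz1, hz2⟩
      have hzp : p < mkq g z := by
        refine lt_of_le_of_ne (by rw [← hq1]; exact mkq_le_of_le hz1.le) (fun he => ?_)
        exact absurd ((isGreatest_cmax hg p).2 (show z ∈ cls g p from he.symm))
          (not_le_of_gt hz1)
      have hzq : mkq g z < q := by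
        refine lt_of_le_of_ne (by rw [← hq2]; exact mkq_le_of_le hz2.le) (fun he => ?_)
        exact absurd ((isLeast_cmin hg q).2 (show z ∈ cls g q from he)) (not_le_of_gt hz2)
      exact (eq_empty_iff_forall_notMem.mp hIoo (mkq g z)) ⟨hzp, hzq⟩
    refine ⟨h1, h2, fun he => ?_⟩
    have hgr : gr g (cmax g p) (cmin g q) := by
      intro z hz
      rw [uIcc_of_le h1.le] at hz
      rcases eq_or_lt_of_le hz.1 with hza | hza
      · rw [← hza]
      rcases eq_or_lt_of_le hz.2 with hzb | hzb
      · rw [hzb, ← he]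
      · exact absurd (⟨hza, hzb⟩ : z ∈ Ioo (cmax g p) (cmin g q))
          (eq_empty_iff_forall_notMem.mp h2 z)
    exact absurd (by rw [← hq1, ← hq2]; exact mkq_eq_mkq.mpr hgr) hpq.ne
  have hcmaxinj : Function.Injective (cmax g : QY g → X) := by
    intro p q h
    rw [← (isGreatest_cmax hg p).1, ← (isGreatest_cmax hg q).1, h]
  have hcmininj : Function.Injective (cmin g : QY g → X) := by
    intro p q h
    rw [← (isLeast_cmin hg p).1, ← (isLeast_cmin hg q).1, h]
  have hJLc : JL.Countable := by
    refine ((countable_jumpsL hg).preimage hcmaxinj).mono ?_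
    rintro p ⟨q, hpq, hIoo⟩
    obtain ⟨h1, h2, h3⟩ := hjump p q hpq hIoo
    exact ⟨cmin g q, h1, h2, h3⟩
  have hJRc : JR.Countable := by
    refine ((countable_jumpsR hg).preimage hcmininj).mono ?_
    rintro q ⟨p, hpq, hIoo⟩
    obtain ⟨h1, h2, h3⟩ := hjump p q hpq hIoo
    exact ⟨cmax g p, h1, h2, h3⟩
  -- scale covers
  have scale : ∀ n : ℕ, ∃ F : Set (QY g), F.Countable ∧
      (∀ w c : QY g, w < c → 1/((n:ℝ)+1) < dist (gbar g w) (gbar g c) →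
        (∃ d ∈ F, w < d ∧ d ≤ c) ∧ (∃ d ∈ F, w ≤ d ∧ d < c)) := by
    intro n
    set δ : ℝ := 1/(2*((n:ℝ)+1)) with hδ_def
    have hδpos : 0 < δ := by positivity
    have h2δ : δ + δ ≤ 1/((n:ℝ)+1) := by
      have hne : ((n:ℝ)+1) ≠ 0 := by positivity
      have he : δ + δ = 1/((n:ℝ)+1) := by
        rw [hδ_def]
        field_simp
        norm_num
      exact he.le
    have hWex : ∀ y : QY g, ∃ W : Set (QY g), ∃ E : Set (QY g), E.Finite ∧ y ∈ W ∧
        IsOpen W ∧ (∀ a ∈ W, ∀ b ∈ W, dist (gbar g a) (gbar g b) ≤ 1/((n:ℝ)+1)) ∧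
        (∀ b c, b ∈ W → c ∉ W → b < c → ∃ d ∈ E, b < d ∧ d ≤ c) ∧
        (∀ c b, c ∉ W → b ∈ W → c < b → ∃ d ∈ E, c ≤ d ∧ d < b) := by
      intro y
      set V : Set (QY g) := (gbar g) ⁻¹' Metric.ball (gbar g y) δ with hV_def
      have hVopen : IsOpen V := Metric.isOpen_ball.preimage hgb
      have hyV : y ∈ V := by
        rw [hV_def, mem_preimage]
        exact Metric.mem_ball_self hδpos
      have hVd : ∀ a ∈ V, ∀ b ∈ V, dist (gbar g a) (gbar g b) ≤ 1/((n:ℝ)+1) := by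
        intro a ha b hb
        rw [hV_def, mem_preimage, Metric.mem_ball] at ha hb
        calc dist (gbar g a) (gbar g b) ≤
            dist (gbar g a) (gbar g y) + dist (gbar g b) (gbar g y) := dist_triangle_right _ _ _
          _ ≤ δ + δ := by exact add_le_add ha.le hb.le
          _ ≤ 1/((n:ℝ)+1) := h2δ
      by_cases hl : ∃ l, l < y <;> by_cases hu : ∃ u, y < u
      · obtain ⟨l, hl1, hl2⟩ := exists_Ioc_subset_of_mem_nhds (hVopen.mem_nhds hyV) hl
        obtain ⟨u, hu1, hu2⟩ := exists_Ico_subset_of_mem_nhds (hVopen.mem_nhds hyV) hu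
        have hWV : Ioo l u ⊆ V := by
          intro z hz
          rcases le_or_gt z y with h | h
          · exact hl2 ⟨hz.1, h⟩
          · exact hu2 ⟨h.le, hz.2⟩
        refine ⟨Ioo l u, {l, u}, (finite_singleton u).insert l, ⟨hl1, hu1⟩, isOpen_Ioo,
          fun a ha b hb => hVd a (hWV ha) b (hWV hb), ?_, ?_⟩
        · intro b c hb hc hbc
          refine ⟨u, by simp, hb.2, ?_⟩
          by_contra hcu
          push_neg at hcu
          exact hc ⟨lt_trans hb.1 hbc, hcu⟩
        · intro c b hc hb hcb
          refine ⟨l, by simp, ?_, hb.1⟩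
          by_contra hlc
          push_neg at hlc
          exact hc ⟨hlc, lt_trans hcb hb.2⟩
      · push_neg at hu
        obtain ⟨l, hl1, hl2⟩ := exists_Ioc_subset_of_mem_nhds (hVopen.mem_nhds hyV) hl
        have hWV : Ioi l ⊆ V := fun z hz => hl2 ⟨hz, hu z⟩
        refine ⟨Ioi l, {l}, finite_singleton l, hl1, isOpen_Ioi,
          fun a ha b hb => hVd a (hWV ha) b (hWV hb), ?_, ?_⟩
        · intro b c hb hc hbc
          exact absurd (lt_trans hb hbc : l < c) hc
        · intro c b hc hb hcb
          exact ⟨l, by simp, not_lt.mp hc, hb⟩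
      · push_neg at hl
        obtain ⟨u, hu1, hu2⟩ := exists_Ico_subset_of_mem_nhds (hVopen.mem_nhds hyV) hu
        have hWV : Iio u ⊆ V := fun z hz => hu2 ⟨hl z, hz⟩
        refine ⟨Iio u, {u}, finite_singleton u, hu1, isOpen_Iio,
          fun a ha b hb => hVd a (hWV ha) b (hWV hb), ?_, ?_⟩
        · intro b c hb hc hbc
          exact ⟨u, by simp, hb, not_lt.mp hc⟩
        · intro c b hc hb hcb
          exact absurd (lt_trans hcb hb : c < u) hc
      · push_neg at hl hu
        refine ⟨univ, ∅, finite_empty, mem_univ y, isOpen_univ, ?_, ?_, ?_⟩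
        · intro a _ b _
          have ha : a = y := le_antisymm (hu a) (hl a)
          have hb : b = y := le_antisymm (hu b) (hl b)
          rw [ha, hb, dist_self]
          positivity
        · intro b c _ hc
          exact absurd (mem_univ c) hc
        · intro c b hc
          exact absurd (mem_univ c) hc
    choose W E hEfin hWmem hWopen hWbd hWright hWleft using hWex
    obtain ⟨t, ht⟩ := isCompact_univ.elim_finite_subcover W hWopen
      (fun y _ => mem_iUnion.mpr ⟨y, hWmem y⟩)
    refine ⟨⋃ y ∈ t, E y, ((t.finite_toSet).biUnion (fun y _ => hEfin y)).countable, ?_⟩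
    intro w c hwc hdist
    constructor
    · obtain ⟨y₀, hy₀⟩ := mem_iUnion.mp (ht (mem_univ w))
      obtain ⟨hy₀t, hwW⟩ := by simpa using hy₀
      have hcnot : c ∉ W y₀ := fun hmem =>
        absurd (hWbd y₀ _ hwW _ hmem) (not_le.mpr hdist)
      obtain ⟨d, hdE, hd1, hd2⟩ := hWright y₀ w c hwW hcnot hwc
      exact ⟨d, mem_biUnion hy₀t hdE, hd1, hd2⟩
    · obtain ⟨y₁, hy₁⟩ := mem_iUnion.mp (ht (mem_univ c))
      obtain ⟨hy₁t, hcW⟩ := by simpa using hy₁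
      have hwnot : w ∉ W y₁ := fun hmem =>
        absurd (hWbd y₁ _ hmem _ hcW) (not_le.mpr hdist)
      obtain ⟨d, hdE, hd1, hd2⟩ := hWleft y₁ w c hwnot hcW hwc
      exact ⟨d, mem_biUnion hy₁t hdE, hd1, hd2⟩
  choose F hFc hF using scale
  set D : Set (QY g) := (⋃ n, F n) ∪ JL ∪ JR with hD_def
  have hDc : D.Countable :=
    ((Set.countable_iUnion hFc).union hJLc).union hJRc
  have hFD : ∀ n (d : QY g), d ∈ F n → d ∈ D := fun n d h =>
    mem_union_left _ (mem_union_left _ (mem_iUnion.mpr ⟨n, h⟩))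
  have hJLD : ∀ d ∈ JL, d ∈ D := fun d h => mem_union_left _ (mem_union_right _ h)
  have hJRD : ∀ d ∈ JR, d ∈ D := fun d h => mem_union_right _ h
  have between : ∀ w x : QY g, w < x → ∃ d ∈ D, w ≤ d ∧ d < x := by
    intro w x hwx
    rcases eq_empty_or_nonempty (Ioo w x) with hemp | ⟨w', hw'⟩
    · exact ⟨w, hJLD w ⟨x, hwx, hemp⟩, le_rfl, hwx⟩
    · obtain ⟨c, hc1, hc2, hc3⟩ := key_nonconst (g := g) hw'.1
      obtain ⟨n, hn⟩ := exists_nat_one_div_lt (dist_pos.mpr (Ne.symm hc3))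
      obtain ⟨⟨d, hdF, hd1, hd2⟩, -⟩ := hF n w c hc1 hn
      exact ⟨d, hFD n d hdF, hd1.le, lt_of_le_of_lt (le_trans hd2 hc2) hw'.2⟩
  have between' : ∀ x u : QY g, x < u → ∃ d ∈ D, x < d ∧ d ≤ u := by
    intro x u hxu
    rcases eq_empty_or_nonempty (Ioo x u) with hemp | ⟨u', hu'⟩
    · exact ⟨u, hJRD u ⟨x, hxu, hemp⟩, hxu, le_rfl⟩
    · obtain ⟨c, hc1, hc2, hc3⟩ := key_nonconst' (g := g) hu'.2
      obtain ⟨n, hn⟩ := exists_nat_one_div_lt (dist_pos.mpr hc3)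
      obtain ⟨-, ⟨d, hdF, hd1, hd2⟩⟩ := hF n c u hc2 hn
      exact ⟨d, hFD n d hdF, lt_of_lt_of_le hu'.1 (le_trans hc1 hd1), hd2.le⟩
  -- basis
  set B : Set (Set (QY g)) :=
    ((Set.image2 Ioo D D ∪ (Iio '' D)) ∪ (Ioi '' D)) ∪ {univ} with hB_def
  have hBc : B.Countable :=
    (((hDc.image2 hDc Ioo).union (hDc.image _)).union (hDc.image _)).union (countable_singleton _)
  have hbasis : TopologicalSpace.IsTopologicalBasis B := by
    refine TopologicalSpace.isTopologicalBasis_of_isOpen_of_nhds ?_ ?_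
    · rintro s hs
      rcases hs with ((hs | hs) | hs) | hs
      · obtain ⟨a, -, b, -, rfl⟩ := hs
        exact isOpen_Ioo
      · obtain ⟨b, -, rfl⟩ := hs
        exact isOpen_Iio
      · obtain ⟨a, -, rfl⟩ := hs
        exact isOpen_Ioi
      · rw [mem_singleton_iff] at hs
        rw [hs]
        exact isOpen_univ
    · intro x U hxU hUopen
      by_cases hl : ∃ l, l < x <;> by_cases hu : ∃ u, x < u
      · obtain ⟨l, hl1, hl2⟩ := exists_Ioc_subset_of_mem_nhds (hUopen.mem_nhds hxU) hl
        obtain ⟨u, hu1, hu2⟩ := exists_Ico_subset_of_mem_nhds (hUopen.mem_nhds hxU) hu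
        obtain ⟨a, haD, ha1, ha2⟩ := between l x hl1
        obtain ⟨b, hbD, hb1, hb2⟩ := between' x u hu1
        refine ⟨Ioo a b,
          mem_union_left _ (mem_union_left _ (mem_union_left _
            (mem_image2_of_mem haD hbD))), ⟨ha2, hb1⟩, ?_⟩
        intro z hz
        rcases le_or_gt z x with h | h
        · exact hl2 ⟨lt_of_le_of_lt ha1 hz.1, h⟩
        · exact hu2 ⟨h.le, lt_of_lt_of_le hz.2 hb2⟩
      · push_neg at hu
        obtain ⟨l, hl1, hl2⟩ := exists_Ioc_subset_of_mem_nhds (hUopen.mem_nhds hxU) hl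
        obtain ⟨a, haD, ha1, ha2⟩ := between l x hl1
        refine ⟨Ioi a, mem_union_left _ (mem_union_right _ ⟨a, haD, rfl⟩), ha2, ?_⟩
        intro z hz
        exact hl2 ⟨lt_of_le_of_lt ha1 hz, hu z⟩
      · push_neg at hl
        obtain ⟨u, hu1, hu2⟩ := exists_Ico_subset_of_mem_nhds (hUopen.mem_nhds hxU) hu
        obtain ⟨b, hbD, hb1, hb2⟩ := between' x u hu1
        refine ⟨Iio b, mem_union_left _ (mem_union_left _ (mem_union_right _ ⟨b, hbD, rfl⟩)),
          hb1, ?_⟩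
        intro z hz
        exact hu2 ⟨hl z, lt_of_lt_of_le hz hb2⟩
      · push_neg at hl hu
        refine ⟨univ, mem_union_right _ rfl, mem_univ x, ?_⟩
        intro z _
        have : z = x := le_antisymm (hu z) (hl z)
        rwa [this]
  exact hbasis.secondCountableTopology hBc

end SecondCountable


section Tight

variable [TopologicalSpace X] [OrderTopology X] [CompactSpace X] [Nonempty X]
variable [TopologicalSpace Z] [T1Space Z]

lemma tight_mkq (hg : Continuous g) : IsTightCard (2 : Cardinal) (mkq g) := by
  rintro ⟨Ps, ⟨hpair, hclosed, Q, hQ, himg⟩, hcard⟩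
  have hnt : Nontrivial ↥Ps := by
    rw [← Cardinal.one_lt_iff_nontrivial, hcard]
    norm_num
  obtain ⟨⟨P₁, hP₁⟩, ⟨P₂, hP₂⟩, hPne⟩ := hnt
  have hne : P₁ ≠ P₂ := fun h => hPne (Subtype.ext h)
  have hd : Disjoint P₁ P₂ := hpair hP₁ hP₂ hne
  rw [IsScatteredSet] at hQ
  push_neg at hQ
  obtain ⟨T, hTQ, hTne, hT⟩ := hQ
  have hTinf : T.Infinite := by
    by_contra hfin
    rw [Set.not_infinite] at hfin
    obtain ⟨x, hx⟩ := hTne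
    have hU : IsOpen ((T \ {x})ᶜ) := (hfin.subset diff_subset).isClosed.isOpen_compl
    refine hT x hx _ hU ?_
    ext z
    simp only [mem_inter_iff, mem_compl_iff, mem_diff, mem_singleton_iff]
    constructor
    · rintro ⟨hz1, hz2⟩
      by_contra hzx
      exact hz1 ⟨hz2, hzx⟩
    · rintro rfl
      exact ⟨fun hh => hh.2 rfl, hx⟩
  have e := hTinf.natEmbedding
  have hinj : Function.Injective (fun k => (e k : QY g)) := fun a b h =>
    e.injective (Subtype.ext h)
  obtain ⟨φ, hφ, hcase⟩ := exists_strictMono_or_strictAnti _ hinj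
  set tseq : ℕ → QY g := fun k => (e (φ k) : QY g) with ht_def
  have htQ : ∀ k, tseq k ∈ Q := fun k => hTQ (e (φ k)).2
  have hfib1 : ∀ k, (P₁ ∩ cls g (tseq k)).Nonempty := by
    intro k
    have hmem : tseq k ∈ mkq g '' P₁ := by rw [himg P₁ hP₁]; exact htQ k
    obtain ⟨p, hp1, hp2⟩ := hmem
    exact ⟨p, hp1, hp2⟩
  have hfib2 : ∀ k, (P₂ ∩ cls g (tseq k)).Nonempty := by
    intro k
    have hmem : tseq k ∈ mkq g '' P₂ := by rw [himg P₂ hP₂]; exact htQ k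
    obtain ⟨p, hp1, hp2⟩ := hmem
    exact ⟨p, hp1, hp2⟩
  rcases hcase with hmono | hanti
  · refine core_mono (hclosed P₁ hP₁) (hclosed P₂ hP₂) hd hfib1 hfib2 ?_
    intro nn mm hnm a ha b hb
    refine lt_of_mkq_lt (g := g) ?_
    rw [show mkq g a = tseq nn from ha, show mkq g b = tseq mm from hb]
    exact hmono hnm
  · refine core_anti (hclosed P₁ hP₁) (hclosed P₂ hP₂) hd hfib1 hfib2 ?_
    intro nn mm hnm a ha b hb
    refine lt_of_mkq_lt (g := g) ?_
    rw [show mkq g a = tseq nn from ha, show mkq g b = tseq mm from hb]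
    exact hanti hnm

end Tight

end Stmt9

open Stmt9 in
/-- Every compact LOTS is dissipated: every continuous map `g` from `X` to a compact
metrizable space is refined by a tight continuous map `f` from `X` to a compact
metrizable space. -/
theorem stmt9 (X : Type u)
    [LinearOrder X] [TopologicalSpace X] [OrderTopology X] [CompactSpace X] :
    IsDissipatedCard (2 : Cardinal.{u}) X := by
  intro Z _ _ _ g hg
  rcases isEmpty_or_nonempty X with hX | hX
  · refine ⟨PUnit.{u+1}, inferInstance, inferInstance, inferInstance, fun _ => PUnit.unit,
      continuous_const, ?_, fun x₁ _ _ => (hX.elim x₁)⟩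
    rintro ⟨Ps, _, hcard⟩
    have hsub : Ps ⊆ {(∅ : Set X)} := fun P _ => by
      simp only [Set.mem_singleton_iff]
      exact Set.eq_empty_of_isEmpty P
    have hle : Cardinal.mk Ps ≤ 1 := by
      calc Cardinal.mk ↥Ps ≤ Cardinal.mk ↥({∅} : Set (Set X)) :=
        Cardinal.mk_le_mk_of_subset hsub
      _ = 1 := Cardinal.mk_singleton _
    rw [hcard] at hle
    norm_num at hle
  · haveI := hX
    haveI : T2Space Z := by
      letI := TopologicalSpace.metrizableSpaceMetric Z
      infer_instance
    haveI hcQ : CompactSpace (QY g) := compactSpace_QY hg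
    haveI := secondCountable_QY (g := g) hg
    haveI hmQ : TopologicalSpace.MetrizableSpace (QY g) := by infer_instance
    exact ⟨QY g, inferInstance, hcQ, hmQ, mkq g, continuous_mkq hg, tight_mkq hg,
      fun x₁ x₂ h => (gr_gy (Quotient.exact h)).symm⟩
end

section
/- Let κ be an ordinal, let X_α be a compact Hausdorff non-metrizable space for each α < κ, let M be a compact metrizable space, and let f : ∏_{α<κ} X_α → M be continuous. Then there are two-element sets E_α ⊆ X_α for each α < κ such that f is constant on ∏_{α<κ} E_α. -/
open Set Topology

/-- If `X_α` is a compact Hausdorff non-metrizable space for each `α < κ` and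
`f : ∏_{α<κ} X_α → M` is continuous with `M` compact metrizable, then there are
two-element sets `E_α ⊆ X_α` such that `f` is constant on `∏_{α<κ} E_α`. -/
theorem stmt11 (κ : Ordinal) (X : ↥(Set.Iio κ) → Type*)
    [∀ α, TopologicalSpace (X α)] [∀ α, CompactSpace (X α)] [∀ α, T2Space (X α)]
    (hnm : ∀ α, ¬ TopologicalSpace.MetrizableSpace (X α))
    (M : Type*) [TopologicalSpace M] [CompactSpace M] [TopologicalSpace.MetrizableSpace M]
    (f : (∀ α, X α) → M) (hf : Continuous f) :
    ∃ E : ∀ α, Set (X α),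
      (∀ α, ∃ a b : X α, a ≠ b ∧ E α = {a, b}) ∧
      ∀ x y : ∀ α, X α, (∀ α, x α ∈ E α) → (∀ α, y α ∈ E α) → f x = f y := by
  classical
  letI : MetricSpace M := TopologicalSpace.metrizableSpaceMetric M
  -- Step 1: for each coordinate α, find two points that `f` cannot distinguish.
  have key : ∀ α, ∃ a b : X α, a ≠ b ∧
      ∀ w : ∀ β, X β, f (Function.update w α a) = f (Function.update w α b) := by
    intro α
    by_contra h
    push_neg at h
    -- the map sending a point of `X α` to the corresponding slice of `f`
    let F : C(X α × (∀ β, X β), M) :=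
      ⟨fun p => f (Function.update p.2 α p.1), by
        apply hf.comp
        exact continuous_pi fun β => by
          by_cases hβ : β = α
          · subst hβ
            simpa [Function.update] using continuous_fst
          · simpa [Function.update, hβ, Function.comp_def] using (continuous_apply β).comp continuous_snd⟩
    let g : X α → C((∀ β, X β), M) := fun a => F.curry a
    have hg : Continuous g := F.curry.continuous
    have hginj : Function.Injective g := by
      intro a b hab
      by_contra hne
      obtain ⟨w, hw⟩ := h a b hne
      exact hw (by simpa [g, F] using congrFun (congrArg DFunLike.coe hab) w)
    have := (hg.isClosedEmbedding hginj).isEmbedding.metrizableSpace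
    exact hnm α this
  choose a b hab hswap using key
  refine ⟨fun α => {a α, b α}, fun α => ⟨a α, b α, hab α, rfl⟩, ?_⟩
  intro x y hx hy
  -- swapping any single coordinate between its two allowed values preserves `f`
  have hswap' : ∀ (α) (w : ∀ β, X β), w α ∈ ({a α, b α} : Set (X α)) →
      y α ∈ ({a α, b α} : Set (X α)) → f (Function.update w α (y α)) = f w := by
    intro α w hw hyα
    have hk := hswap α w
    simp only [mem_insert_iff, mem_singleton_iff] at hw hyα
    rcases hw with hw | hw <;> rcases hyα with hyα | hyα <;> rw [hyα]
    · rw [show Function.update w α (a α) = w from Function.update_eq_self_iff.2 hw.symm]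
    · rw [← hk, show Function.update w α (a α) = w from Function.update_eq_self_iff.2 hw.symm]
    · rw [hk, show Function.update w α (b α) = w from Function.update_eq_self_iff.2 hw.symm]
    · rw [show Function.update w α (b α) = w from Function.update_eq_self_iff.2 hw.symm]
  -- points obtained from `x` by finitely many swaps
  have hfin : ∀ s : Finset ↥(Set.Iio κ),
      f (fun α => if α ∈ s then y α else x α) = f x := by
    intro s
    induction s using Finset.induction with
    | empty => simp
    | @insert α s hα ih =>
        have hz : (fun β => if β ∈ insert α s then y β else x β)
            = Function.update (fun β => if β ∈ s then y β else x β) α (y α) := by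
          funext β
          by_cases hβ : β = α
          · subst hβ; simp [hα]
          · simp [Function.update, hβ, hβ]
        rw [hz, hswap' α _ (by simp [hα]; exact hx α) (hy α)]
        exact ih
  -- take the limit over larger and larger finite sets of coordinates
  have htend : Filter.Tendsto (fun s : Finset ↥(Set.Iio κ) =>
      (fun α => if α ∈ s then y α else x α)) Filter.atTop (nhds y) := by
    rw [tendsto_pi_nhds]
    intro α
    apply Filter.Tendsto.congr' _ tendsto_const_nhds
    filter_upwards [Filter.eventually_ge_atTop ({α} : Finset _)] with s hs
    simp [Finset.singleton_subset_iff.mp hs]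
  have h1 : Filter.Tendsto (fun s : Finset ↥(Set.Iio κ) =>
      f (fun α => if α ∈ s then y α else x α)) Filter.atTop (nhds (f y)) :=
    (hf.tendsto y).comp htend
  have h2 : Filter.Tendsto (fun s : Finset ↥(Set.Iio κ) =>
      f (fun α => if α ∈ s then y α else x α)) Filter.atTop (nhds (f x)) := by
    simp only [hfin]
    exact tendsto_const_nhds
  exact (tendsto_nhds_unique h1 h2).symm
end

section
/- Let n be finite and let X_k be a compact Hausdorff space for each k ≤ n. (1) If X_n is not scattered and X_k is not metrizable for each k < n, then ∏_{k≤n} X_k is not 2^n-dissipated. (2) If X_k is a compact non-metrizable Hausdorff space for every k < ω, then ∏_{k<ω} X_k is not weakly c-dissipated. -/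
open Set Topology

universe u

section MyAux

open TopologicalSpace

lemma uncount_not_scattered {Y : Type*} [TopologicalSpace Y] [SecondCountableTopology Y]
    {S : Set Y} (hS : ¬ S.Countable) : ¬ IsScatteredSet S := by
  classical
  obtain ⟨B, hBc, -, hB⟩ := exists_countable_basis Y
  set T : Set Y := {x ∈ S | ∀ U ∈ B, x ∈ U → ¬ (U ∩ S).Countable} with hT
  have hSTc : (S \ T).Countable := by
    have hsub : S \ T ⊆ ⋃ U ∈ {U | U ∈ B ∧ (U ∩ S).Countable}, U ∩ S := by
      rintro x ⟨hxS, hxT⟩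
      simp only [hT, mem_setOf_eq, not_and, not_forall] at hxT
      obtain ⟨U, hUB, hxU, hUc⟩ := hxT hxS
      rw [not_not] at hUc
      exact mem_biUnion ⟨hUB, hUc⟩ ⟨hxU, hxS⟩
    exact Countable.mono hsub <|
      Set.Countable.biUnion (hBc.mono (sep_subset _ _)) (fun U hU => hU.2)
  intro hsc
  have hTne : T.Nonempty := by
    rcases eq_empty_or_nonempty T with h | h
    · exact absurd (hSTc.mono (by rw [h]; simp)) hS
    · exact h
  obtain ⟨x, hxT, U, hUo, hUT⟩ := hsc T (fun y hy => hy.1) hTne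
  have hxU : x ∈ U := by
    have : x ∈ U ∩ T := by rw [hUT]; rfl
    exact this.1
  obtain ⟨U', hU'B, hxU', hU'U⟩ := hB.exists_subset_of_mem_open hxU hUo
  refine hxT.2 U' hU'B hxU' (Countable.mono ?_ ((countable_singleton x).union hSTc))
  rintro y ⟨hyU', hyS⟩
  by_cases hyT : y ∈ T
  · left
    have : y ∈ U ∩ T := ⟨hU'U hyU', hyT⟩
    rw [hUT] at this; exact this
  · exact Or.inr ⟨hyS, hyT⟩


lemma exists_swap_pair {ι : Type} [DecidableEq ι] {X : ι → Type} [∀ i, TopologicalSpace (X i)]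
    [∀ i, CompactSpace (X i)] [∀ i, T2Space (X i)] (i : ι)
    (hnm : ¬ MetrizableSpace (X i)) {Y : Type} [TopologicalSpace Y] [MetrizableSpace Y]
    {f : (∀ j, X j) → Y} (hf : Continuous f) :
    ∃ a b : X i, a ≠ b ∧
      ∀ x : ∀ j, X j, f (Function.update x i a) = f (Function.update x i b) := by
  classical
  letI : MetricSpace Y := metrizableSpaceMetric Y
  set e : (∀ j, X j) ≃ₜ X i × ∀ j : {j // j ≠ i}, X j := Homeomorph.piSplitAt i X with he
  set F : C(X i × (∀ j : {j // j ≠ i}, X j), Y) := ⟨f ∘ e.symm, hf.comp e.symm.continuous⟩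
  set G := F.curry with hG
  by_cases hinj : Function.Injective G
  · exact absurd ((G.continuous.isClosedEmbedding hinj).toIsEmbedding.metrizableSpace) hnm
  · rw [Function.not_injective_iff] at hinj
    obtain ⟨a, b, hGab, hab⟩ := hinj
    refine ⟨a, b, hab, fun x => ?_⟩
    have key : ∀ c : X i, e.symm (c, fun j : {j // j ≠ i} => x j) = Function.update x i c := by
      intro c
      funext j
      rcases eq_or_ne j i with rfl | hj
      · simp [he, Equiv.piSplitAt]
      · simp [he, Equiv.piSplitAt, hj, Function.update_of_ne hj]
    have h1 : ∀ r, f (e.symm (a, r)) = f (e.symm (b, r)) := by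
      intro r
      have := DFunLike.congr_fun hGab r
      simpa [hG, ContinuousMap.curry_apply, F] using this
    rw [← key a, ← key b]
    exact h1 _


lemma exists_cont_uncountable_range {A : Type*} [TopologicalSpace A] [CompactSpace A]
    [T2Space A] (hA : ¬ IsScatteredSet (univ : Set A)) :
    ∃ h : A → (List Bool → unitInterval), Continuous h ∧ ¬ (Set.range h).Countable := by
  classical
  rw [IsScatteredSet] at hA
  push_neg at hA
  obtain ⟨T, -, hTne, hTperf⟩ := hA
  set C : Set A := closure T with hCdef
  have hCne : C.Nonempty := hTne.mono subset_closure
  have hC : ∀ x ∈ C, ∀ U : Set A, IsOpen U → x ∈ U → ∃ y, (y ∈ U ∩ C) ∧ y ≠ x := by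
    intro x hxC U hUo hxU
    obtain ⟨t, htU, htT⟩ := mem_closure_iff.1 hxC U hUo hxU
    rcases eq_or_ne t x with rfl | htx
    · -- t = x ∈ T
      have hne := hTperf t htT U hUo
      have : ¬ (U ∩ T ⊆ {t}) := by
        intro hsub
        exact hne (Subset.antisymm hsub (by simp [htU, htT]))
      rw [not_subset] at this
      obtain ⟨y, hyUT, hyx⟩ := this
      exact ⟨y, ⟨hyUT.1, subset_closure hyUT.2⟩, hyx⟩
    · exact ⟨t, ⟨htU, subset_closure htT⟩, htx⟩
  -- splitting step
  have step : ∀ N : {V : Set A // IsOpen V ∧ (V ∩ C).Nonempty},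
      ∃ p : {V : Set A // IsOpen V ∧ (V ∩ C).Nonempty} ×
            {V : Set A // IsOpen V ∧ (V ∩ C).Nonempty},
        p.1.1 ⊆ N.1 ∧ p.2.1 ⊆ N.1 ∧ Disjoint (closure p.1.1) (closure p.2.1) := by
    rintro ⟨V, hVo, x, hxV, hxC⟩
    obtain ⟨y, ⟨hyV, hyC⟩, hyx⟩ := hC x hxC V hVo hxV
    obtain ⟨Wy, Wx, hWyo, hWxo, hyW, hxW, hWd⟩ := t2_separation hyx
    obtain ⟨Ux, hUxo, hxUx, hUxcl⟩ := normal_exists_closure_subset isClosed_singleton hWxo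
      (singleton_subset_iff.2 hxW)
    obtain ⟨Uy, hUyo, hyUy, hUycl⟩ := normal_exists_closure_subset isClosed_singleton hWyo
      (singleton_subset_iff.2 hyW)
    refine ⟨⟨⟨V ∩ Ux, hVo.inter hUxo, x, ⟨hxV, hxUx rfl⟩, hxC⟩,
             ⟨V ∩ Uy, hVo.inter hUyo, y, ⟨hyV, hyUy rfl⟩, hyC⟩⟩,
      inter_subset_left, inter_subset_left, ?_⟩
    have h1 : closure (V ∩ Ux) ⊆ Wx := (closure_mono inter_subset_right).trans hUxcl
    have h2 : closure (V ∩ Uy) ⊆ Wy := (closure_mono inter_subset_right).trans hUycl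
    exact (hWd.symm.mono h1 h2)
  set Nd := {V : Set A // IsOpen V ∧ (V ∩ C).Nonempty} with hNd
  set step' : Nd → Nd × Nd := fun N => (step N).choose with hstep'
  have hsp : ∀ N : Nd, (step' N).1.1 ⊆ N.1 ∧ (step' N).2.1 ⊆ N.1 ∧
      Disjoint (closure (step' N).1.1) (closure (step' N).2.1) := fun N => (step N).choose_spec
  set root : Nd := ⟨univ, isOpen_univ, by simpa using hCne⟩ with hroot
  set tree : List Bool → Nd := fun s =>
    List.rec root (fun b _ ih => if b then (step' ih).2 else (step' ih).1) s with htree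
  have htree_cons : ∀ (b : Bool) (s : List Bool),
      tree (b :: s) = if b then (step' (tree s)).2 else (step' (tree s)).1 := fun _ _ => rfl
  have tree_sub : ∀ (b : Bool) (s : List Bool), (tree (b :: s)).1 ⊆ (tree s).1 := by
    intro b s
    rw [htree_cons]
    cases b
    · simpa using (hsp (tree s)).1
    · simpa using (hsp (tree s)).2.1
  have tree_disj : ∀ s : List Bool,
      Disjoint (closure (tree (false :: s)).1) (closure (tree (true :: s)).1) := by
    intro s
    rw [htree_cons, htree_cons]
    simpa using (hsp (tree s)).2.2
  -- Urysohn functions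
  have uex : ∀ s : List Bool, ∃ φ : C(A, ℝ),
      EqOn φ 0 (closure (tree (false :: s)).1) ∧ EqOn φ 1 (closure (tree (true :: s)).1) ∧
      ∀ x, φ x ∈ Icc (0:ℝ) 1 :=
    fun s => exists_continuous_zero_one_of_isClosed isClosed_closure isClosed_closure
      (tree_disj s)
  set u : List Bool → C(A, ℝ) := fun s => (uex s).choose with hu
  have huspec := fun s => (uex s).choose_spec
  refine ⟨fun x s => ⟨u s x, (huspec s).2.2 x⟩, ?_, ?_⟩
  · exact continuous_pi fun s => ((u s).continuous).subtype_mk _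
  · -- uncountability
    set h : A → (List Bool → unitInterval) := fun x s => ⟨u s x, (huspec s).2.2 x⟩ with hh
    -- branches
    set bl : (ℕ → Bool) → ℕ → List Bool := fun σ m => Nat.rec [] (fun m ih => σ m :: ih) m
      with hbl
    have hbl_succ : ∀ σ m, bl σ (m + 1) = σ m :: bl σ m := fun _ _ => rfl
    set K : (ℕ → Bool) → ℕ → Set A := fun σ m => closure ((tree (bl σ m)).1 ∩ C) with hK
    have hKne : ∀ σ m, (K σ m).Nonempty := fun σ m =>
      ((tree (bl σ m)).2.2).mono subset_closure
    have hKdec : ∀ σ m, K σ (m + 1) ⊆ K σ m := by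
      intro σ m
      apply closure_mono
      rw [hbl_succ]
      exact inter_subset_inter_left _ (tree_sub _ _)
    have hKcl : ∀ σ m, IsClosed (K σ m) := fun _ _ => isClosed_closure
    have hKint : ∀ σ : ℕ → Bool, (⋂ m, K σ m).Nonempty := fun σ =>
      IsCompact.nonempty_iInter_of_sequence_nonempty_isCompact_isClosed (K σ) (hKdec σ)
        (hKne σ) ((hKcl σ 0).isCompact) (hKcl σ)
    set xpt : (ℕ → Bool) → A := fun σ => (hKint σ).choose with hxpt
    have hxptm : ∀ σ m, xpt σ ∈ K σ m := by
      intro σ m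
      have := (hKint σ).choose_spec
      exact mem_iInter.1 this m
    -- values on branches
    have hval : ∀ (σ : ℕ → Bool) (m : ℕ),
        u (bl σ m) (xpt σ) = if σ m then 1 else 0 := by
      intro σ m
      have hx : xpt σ ∈ closure ((tree (σ m :: bl σ m)).1) := by
        have := hxptm σ (m + 1)
        rw [hK] at this
        simp only [hbl_succ] at this
        exact (closure_mono inter_subset_left) this
      cases hσ : σ m
      · rw [hσ] at hx
        simpa [hu] using (huspec (bl σ m)).1 hx
      · rw [hσ] at hx
        simpa [hu] using (huspec (bl σ m)).2.1 hx
    have hblagree : ∀ (σ τ : ℕ → Bool) (M : ℕ), (∀ j, j < M → σ j = τ j) →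
        bl σ M = bl τ M := by
      intro σ τ M
      induction M with
      | zero => intro _; rfl
      | succ k ih =>
        intro hag
        rw [hbl_succ, hbl_succ, hag k (Nat.lt_succ_self k),
          ih (fun j hj => hag j (hj.trans (Nat.lt_succ_self k)))]
    have hinj : Function.Injective (fun σ => h (xpt σ)) := by
      intro σ τ hστ
      by_contra hne
      have hex : ∃ m, σ m ≠ τ m := by
        by_contra hc
        push_neg at hc
        exact hne (funext hc)
      set m := Nat.find hex with hm
      have hmin : ∀ j, j < m → σ j = τ j := fun j hj => by
        have := Nat.find_min hex hj
        simpa using this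
      have hbleq : bl σ m = bl τ m := hblagree σ τ m hmin
      have hvv : u (bl τ m) (xpt σ) = u (bl τ m) (xpt τ) :=
        congrArg Subtype.val (congrFun (hστ : h (xpt σ) = h (xpt τ)) (bl τ m))
      have hL : u (bl τ m) (xpt σ) = if σ m then 1 else 0 := by
        rw [← hbleq]; exact hval σ m
      have hR := hval τ m
      rw [hvv, hR] at hL
      have hneq : σ m ≠ τ m := Nat.find_spec hex
      cases hσ : σ m <;> cases hτ : τ m <;> rw [hσ, hτ] at hL hneq <;>
        first
          | exact hneq rfl
          | norm_num at hL
    have hbig : Cardinal.aleph0 < Cardinal.mk (ℕ → Bool) := by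
      calc Cardinal.aleph0 < 2 ^ Cardinal.aleph0 := Cardinal.cantor _
      _ = Cardinal.mk (ℕ → Bool) := by simp [Cardinal.mk_arrow]
    intro hcnt
    have h1 : (Set.range (fun σ => h (xpt σ))).Countable :=
      hcnt.mono (range_comp_subset_range xpt h)
    rw [← Set.countable_coe_iff] at h1
    have h2 : Countable (ℕ → Bool) := Countable.of_equiv _ (Equiv.ofInjective _ hinj).symm
    have h3 := @Cardinal.mk_le_aleph0 (ℕ → Bool) h2
    exact absurd h3 (not_le.2 hbig)



lemma metrizable_of_subsingleton {A : Type*} [TopologicalSpace A] (h : Subsingleton A) :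
    MetrizableSpace A := by
  have htop : ∀ t1 t2 : TopologicalSpace A, t1 = t2 := by
    intro t1 t2
    apply TopologicalSpace.ext
    ext s
    rcases Set.eq_empty_or_nonempty s with rfl | ⟨x, hx⟩
    · simp [@isOpen_empty A t1, @isOpen_empty A t2]
    · have : s = univ := eq_univ_of_forall fun y => by rwa [Subsingleton.elim y x]
      subst this
      simp [@isOpen_univ A t1, @isOpen_univ A t2]
  letI m : MetricSpace A := MetricSpace.induced (fun _ => (0 : ℝ))
    (fun a b _ => Subsingleton.elim a b) inferInstance
  exact (congrArg (fun t => @MetrizableSpace A t) (htop (@UniformSpace.toTopologicalSpace A (@PseudoMetricSpace.toUniformSpace A m.toPseudoMetricSpace)) _)).mp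
    (inferInstance : @MetrizableSpace A (@UniformSpace.toTopologicalSpace A (@PseudoMetricSpace.toUniformSpace A m.toPseudoMetricSpace)))

-- Finer transfers countability of images
lemma finer_image_countable {X Y Z : Type*} {f : X → Y} {g : X → Z}
    (hfin : Finer f g) {S : Set X} (hc : (f '' S).Countable) : (g '' S).Countable := by
  classical
  rcases S.eq_empty_or_nonempty with rfl | ⟨x0, hx0⟩
  · simp
  apply Countable.mono ?_ (hc.image (fun y => if hy : ∃ x ∈ S, f x = y then g hy.choose else g x0))
  rintro _ ⟨x, hxS, rfl⟩
  refine ⟨f x, Set.mem_image_of_mem f hxS, ?_⟩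
  show dite _ _ _ = g x
  rw [dif_pos ⟨x, hxS, rfl⟩]
  exact hfin _ _ (⟨x, hxS, rfl⟩ : ∃ x' ∈ S, f x' = f x).choose_spec.2

-- the chain lemma
lemma chain_eq {n : ℕ} {X : Fin (n + 1) → Type} {Y : Type}
    {f : (∀ j, X j) → Y} (a b : ∀ k : Fin n, X k.castSucc)
    (hswap : ∀ (k : Fin n) (w : ∀ j, X j),
      f (Function.update w k.castSucc (a k)) = f (Function.update w k.castSucc (b k)))
    (x y : ∀ j, X j)
    (hx : ∀ k : Fin n, x k.castSucc = a k ∨ x k.castSucc = b k)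
    (hy : ∀ k : Fin n, y k.castSucc = a k ∨ y k.castSucc = b k)
    (hl : x (Fin.last n) = y (Fin.last n)) : f x = f y := by
  classical
  set z : ℕ → ∀ j, X j := fun m j => if (j : ℕ) < m then y j else x j with hz
  have swap2 : ∀ (k : Fin n) (w : ∀ j, X j) (u v : X k.castSucc),
      (u = a k ∨ u = b k) → (v = a k ∨ v = b k) →
      f (Function.update w k.castSucc u) = f (Function.update w k.castSucc v) := by
    intro k w u v hu hv
    rcases hu with rfl | rfl <;> rcases hv with rfl | rfl
    · rfl
    · exact hswap k w
    · exact (hswap k w).symm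
    · rfl
  have hz0 : z 0 = x := by funext j; simp [hz]
  have hzn : z (n + 1) = y := by
    funext j
    simp [hz, j.isLt]
  have key : ∀ m, f (z m) = f x := by
    intro m
    induction m with
    | zero => rw [hz0]
    | succ m ih =>
      by_cases hm : m < n
      · set k : Fin n := ⟨m, hm⟩ with hk
        have e1 : z (m + 1) = Function.update (z m) k.castSucc (y k.castSucc) := by
          funext j
          rcases eq_or_ne j k.castSucc with rfl | hj
          · simp [hz, Function.update_self, hk, Fin.castSucc, Nat.lt_succ_self]
          · rw [Function.update_of_ne hj]
            have hjm : (j : ℕ) ≠ m := by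
              intro hc
              apply hj
              apply Fin.ext
              simp [hk, hc]
            simp only [hz]
            have : (j : ℕ) < m + 1 ↔ (j : ℕ) < m := by omega
            rw [if_congr this rfl rfl]
        have e2 : Function.update (z m) k.castSucc (x k.castSucc) = z m := by
          funext j
          rcases eq_or_ne j k.castSucc with rfl | hj
          · simp [hz, Function.update_self, hk]
          · rw [Function.update_of_ne hj]
        rw [e1, swap2 k (z m) _ _ (hy k) (hx k), e2, ih]
      · have e3 : z (m + 1) = z m := by
          funext j
          simp only [hz]
          rcases lt_trichotomy (j : ℕ) m with hlt | heq | hgt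
          · rw [if_pos (by omega), if_pos hlt]
          · have hj1 : (j : ℕ) < m + 1 := by omega
            rw [if_pos hj1, if_neg (by omega)]
            have hjn : (j : ℕ) = n := by have := j.isLt; omega
            have : j = Fin.last n := Fin.ext (by simpa using hjn)
            subst this
            exact hl.symm
          · rw [if_neg (by omega), if_neg (by omega)]
        rw [e3, ih]
  rw [← hzn, key]


lemma uncountable_of_inj_cantor {α : Type*} {S : Set α} (v : (ℕ → Bool) → α)
    (hinj : Function.Injective v) (hsub : Set.range v ⊆ S) : ¬ S.Countable := by
  have hbig : Cardinal.aleph0 < Cardinal.mk (ℕ → Bool) := by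
    calc Cardinal.aleph0 < 2 ^ Cardinal.aleph0 := Cardinal.cantor _
    _ = Cardinal.mk (ℕ → Bool) := by simp [Cardinal.mk_arrow]
  intro hc
  have h1 : (Set.range v).Countable := hc.mono hsub
  rw [← Set.countable_coe_iff] at h1
  have h2 : Countable (ℕ → Bool) := Countable.of_equiv _ (Equiv.ofInjective _ hinj).symm
  exact absurd (@Cardinal.mk_le_aleph0 (ℕ → Bool) h2) (not_le.2 hbig)

end MyAux

/-- (1) If `X_k` (k ≤ n) are compact Hausdorff, `X_n` is not scattered and `X_k` is not
metrizable for `k < n`, then `∏_{k≤n} X_k` is not `2^n`-dissipated.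
(2) If `X_k` (k < ω) are compact Hausdorff non-metrizable, then `∏_{k<ω} X_k` is not
weakly c-dissipated. -/
theorem stmt12 :
    (∀ (n : ℕ) (X : Fin (n + 1) → Type)
      [∀ k, TopologicalSpace (X k)] [∀ k, CompactSpace (X k)] [∀ k, T2Space (X k)],
      ¬ IsScatteredSet (Set.univ : Set (X (Fin.last n))) →
      (∀ k : Fin n, ¬ TopologicalSpace.MetrizableSpace (X k.castSucc)) →
      ¬ IsDissipatedCard ((2 ^ n : ℕ) : Cardinal.{0}) (∀ k, X k)) ∧
    (∀ (X : ℕ → Type)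
      [∀ k, TopologicalSpace (X k)] [∀ k, CompactSpace (X k)] [∀ k, T2Space (X k)],
      (∀ k, ¬ TopologicalSpace.MetrizableSpace (X k)) →
      ¬ IsWeaklyCDissipated (∀ k, X k)) := by
  constructor
  · intro n X _ _ _ hXn hnm hdiss
    classical
    obtain ⟨h, hhc, hhu⟩ := exists_cont_uncountable_range hXn
    set g : (∀ k, X k) → (List Bool → unitInterval) := fun x => h (x (Fin.last n)) with hg
    have hgc : Continuous g := hhc.comp (continuous_apply _)
    obtain ⟨Y, tY, hYc, hYm, f, hfc, hft, hfin⟩ := hdiss (List Bool → unitInterval) g hgc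
    letI := tY; haveI := hYc; haveI := hYm
    choose a b hab hswap using fun k : Fin n =>
      exists_swap_pair (X := X) k.castSucc (hnm k) hfc
    set c : (Fin n → Bool) → ∀ k : Fin n, X k.castSucc :=
      fun s k => if s k then b k else a k with hc
    set P : (Fin n → Bool) → Set (∀ j, X j) :=
      fun s => {x | ∀ k : Fin n, x k.castSucc = c s k} with hP
    have hXlast_ne : Nonempty (X (Fin.last n)) := by
      by_contra hne
      exact hXn fun T _ hT => absurd ⟨hT.choose⟩ hne
    obtain ⟨z0⟩ := hXlast_ne
    have hmem : ∀ (s : Fin n → Bool) (z : X (Fin.last n)), Fin.snoc (c s) z ∈ P s :=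
      fun s z k => Fin.snoc_castSucc z (c s) k
    have hPne : ∀ s, (P s).Nonempty := fun s => ⟨Fin.snoc (c s) z0, hmem s z0⟩
    have hPcl : ∀ s, IsClosed (P s) := by
      intro s
      have : P s = ⋂ k : Fin n, (fun x : ∀ j, X j => x k.castSucc) ⁻¹' {c s k} := by
        ext x; simp [hP, Set.mem_iInter]
      rw [this]
      exact isClosed_iInter fun k => isClosed_singleton.preimage (continuous_apply _)
    have hPdisj : ∀ s t, s ≠ t → Disjoint (P s) (P t) := by
      intro s t hst
      have hex : ∃ k, s k ≠ t k := by
        by_contra hcon; push_neg at hcon; exact hst (funext hcon)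
      obtain ⟨k, hk⟩ := hex
      rw [Set.disjoint_left]
      intro x hxs hxt
      have h1 : c s k = c t k := by rw [← hxs k, ← hxt k]
      have h2 : c s k ≠ c t k := by
        simp only [hc]
        cases hsk : s k <;> cases htk : t k <;> rw [hsk, htk] at hk <;>
          first
            | exact absurd rfl hk
            | simp [hab k, (hab k).symm, Ne.symm (hab k)]
      exact h2 h1
    have hcor : ∀ (s : Fin n → Bool) (k : Fin n), c s k = a k ∨ c s k = b k := by
      intro s k
      cases hsk : s k <;> simp [hc, hsk]
    have himg : ∀ s t, f '' P s ⊆ f '' P t := by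
      intro s t
      rintro _ ⟨x, hx, rfl⟩
      refine ⟨Fin.snoc (c t) (x (Fin.last n)), hmem t _, ?_⟩
      refine (chain_eq a b hswap _ _ ?_ ?_ ?_)
      · intro k
        rw [Fin.snoc_castSucc]
        exact hcor t k
      · intro k
        rw [hx k]
        exact hcor s k
      · rw [Fin.snoc_last]
    have himg_eq : ∀ s t, f '' P s = f '' P t := fun s t => (himg s t).antisymm (himg t s)
    set Q := f '' P (fun _ => false) with hQdef
    have hQunc : ¬ Q.Countable := by
      intro hQc
      apply hhu
      have h1 : (g '' P (fun _ => false)).Countable :=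
        finer_image_countable hfin (by rwa [← hQdef])
      have h2 : Set.range h ⊆ g '' P (fun _ => false) := by
        rintro _ ⟨z, rfl⟩
        exact ⟨Fin.snoc (c _) z, hmem _ z, by simp [hg, Fin.snoc_last]⟩
      exact h1.mono h2
    letI : MetricSpace Y := TopologicalSpace.metrizableSpaceMetric Y
    haveI : SecondCountableTopology Y := inferInstance
    have hQns : ¬ IsScatteredSet Q := uncount_not_scattered hQunc
    apply hft
    refine ⟨Set.range P, ⟨?_, ?_, Q, hQns, ?_⟩, ?_⟩
    · rintro P1 ⟨s, rfl⟩ P2 ⟨t, rfl⟩ hne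
      exact hPdisj s t fun hst => hne (by rw [hst])
    · rintro P1 ⟨s, rfl⟩
      exact hPcl s
    · rintro P1 ⟨s, rfl⟩
      exact himg_eq s _
    · have hPinj : Function.Injective P := by
        intro s t hst
        by_contra hne
        obtain ⟨x, hx⟩ := hPne s
        exact Set.disjoint_left.1 (hPdisj s t hne) hx (hst ▸ hx)
      rw [Cardinal.mk_range_eq _ hPinj, Cardinal.mk_fintype]
      have : Fintype.card (Fin n → Bool) = 2 ^ n := by simp
      rw [this]
  · intro X _ _ _ hnm hdiss
    classical
    have hss : ∀ k, ∃ p q : X k, p ≠ q := by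
      intro k
      by_contra hcon
      push_neg at hcon
      exact hnm k (metrizable_of_subsingleton ⟨hcon⟩)
    choose p q hpq using hss
    have hXne : ∀ k, Nonempty (X k) := fun k => ⟨p k⟩
    have hu : ∀ k, ∃ φ : C(X k, ℝ), EqOn φ 0 {p k} ∧ EqOn φ 1 {q k} ∧
        ∀ x, φ x ∈ Icc (0:ℝ) 1 := fun k =>
      exists_continuous_zero_one_of_isClosed isClosed_singleton isClosed_singleton
        (by simp [hpq k])
    choose u hu0 hu1 huI using hu
    set g : (∀ k, X k) → (ℕ → unitInterval) :=
      fun x m => ⟨u (2*m+1) (x (2*m+1)), huI _ _⟩ with hg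
    have hgc : Continuous g := continuous_pi fun m =>
      (((u _).continuous).comp (continuous_apply _)).subtype_mk _
    obtain ⟨Y, tY, hYc, hYm, f, hfc, hft, hfin⟩ := hdiss (ℕ → unitInterval) g hgc
    letI := tY; haveI := hYc; haveI := hYm
    choose a b hab hswap using fun m : ℕ => exists_swap_pair (X := X) (2*m) (hnm (2*m)) hfc
    set D : Set (∀ j, X j) := {x | ∀ m : ℕ, x (2*m) = a m ∨ x (2*m) = b m} with hD
    have hDcl : IsClosed D := by
      have : D = ⋂ m : ℕ, (fun x : ∀ j, X j => x (2*m)) ⁻¹' {a m, b m} := by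
        ext x
        simp [hD, Set.mem_iInter]
      rw [this]
      exact isClosed_iInter fun m =>
        (((Set.finite_singleton (b m)).insert (a m)).isClosed).preimage (continuous_apply _)
    set φ : (∀ j, X j) → (ℕ → Bool) :=
      fun x m => if x (2*m) = b m then true else false with hφ
    have hφc : ContinuousOn φ D := by
      intro x hx
      rw [ContinuousWithinAt, tendsto_pi_nhds]
      intro m
      rcases hx m with hxa | hxb
      · have hval : φ x m = false := by
          simp only [hφ]
          rw [if_neg (by rw [hxa]; exact hab m)]
        rw [hval]
        have hopen : IsOpen ((fun x' : ∀ j, X j => x' (2*m)) ⁻¹' {b m}ᶜ) :=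
          (isClosed_singleton.isOpen_compl).preimage (continuous_apply _)
        have hmemx : x ∈ (fun x' : ∀ j, X j => x' (2*m)) ⁻¹' {b m}ᶜ := by
          simp only [Set.mem_preimage, Set.mem_compl_iff, Set.mem_singleton_iff]
          rw [hxa]; exact hab m
        have hev : ∀ᶠ y in nhdsWithin x D, φ y m = false := by
          filter_upwards [mem_nhdsWithin_of_mem_nhds (hopen.mem_nhds hmemx)] with y hy1
          simp only [hφ]
          rw [if_neg (by simpa using hy1 : ¬ y (2*m) = b m)]
        exact (tendsto_const_nhds).congr' (hev.mono fun y hy => hy.symm)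
      · have hval : φ x m = true := by
          simp only [hφ]
          rw [if_pos hxb]
        rw [hval]
        have hopen : IsOpen ((fun x' : ∀ j, X j => x' (2*m)) ⁻¹' {a m}ᶜ) :=
          (isClosed_singleton.isOpen_compl).preimage (continuous_apply _)
        have hmemx : x ∈ (fun x' : ∀ j, X j => x' (2*m)) ⁻¹' {a m}ᶜ := by
          simp only [Set.mem_preimage, Set.mem_compl_iff, Set.mem_singleton_iff]
          rw [hxb]; exact Ne.symm (hab m)
        have hev : ∀ᶠ y in nhdsWithin x D, φ y m = true := by
          filter_upwards [mem_nhdsWithin_of_mem_nhds (hopen.mem_nhds hmemx),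
            self_mem_nhdsWithin] with y hy1 hy2
          simp only [hφ]
          rcases hy2 m with h | h
          · exact absurd h hy1
          · rw [if_pos h]
        exact (tendsto_const_nhds).congr' (hev.mono fun y hy => hy.symm)
    set Q := f '' D with hQdef
    have swap2 : ∀ (m : ℕ) (w : ∀ j, X j) (uu vv : X (2*m)),
        (uu = a m ∨ uu = b m) → (vv = a m ∨ vv = b m) →
        f (Function.update w (2*m) uu) = f (Function.update w (2*m) vv) := by
      intro m w uu vv huu hvv
      rcases huu with rfl | rfl <;> rcases hvv with rfl | rfl
      · rfl
      · exact hswap m w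
      · exact (hswap m w).symm
      · rfl
    have hfib : ∀ y ∈ Q, φ '' (f ⁻¹' {y} ∩ D) = Set.univ := by
      rintro _ ⟨x, hxD, rfl⟩
      rw [eq_univ_iff_forall]
      intro σ
      set t : ∀ m : ℕ, X (2*m) := fun m => if σ m then b m else a m with ht
      have htor : ∀ m, t m = a m ∨ t m = b m := by
        intro m; cases hσ : σ m <;> simp [ht, hσ]
      set w : ℕ → ∀ j, X j :=
        fun M => Nat.rec x (fun m ih => Function.update ih (2*m) (t m)) M with hw
      have hw_succ : ∀ M, w (M+1) = Function.update (w M) (2*M) (t M) := fun _ => rfl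
      have hw_eval : ∀ M j, (∀ m, 2*m = j → M ≤ m) → w M j = x j := by
        intro M
        induction M with
        | zero => intro j _; rfl
        | succ M ih =>
          intro j hj
          rw [hw_succ, Function.update_of_ne, ih]
          · intro m hm
            exact Nat.le_of_succ_le (hj m hm)
          · intro hje
            have := hj M hje.symm
            omega
      have hw_evalset : ∀ M m, m < M → w M (2*m) = t m := by
        intro M
        induction M with
        | zero => intro m hm; exact absurd hm (Nat.not_lt_zero m)
        | succ M ih =>
          intro m hm
          rcases Nat.lt_succ_iff_lt_or_eq.1 hm with hlt | rfl
          · rw [hw_succ, Function.update_of_ne (by omega : 2*m ≠ 2*M)]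
            exact ih m hlt
          · rw [hw_succ, Function.update_self]
      have hfw : ∀ M, f (w M) = f x := by
        intro M
        induction M with
        | zero => rfl
        | succ M ih =>
          rw [hw_succ]
          have e2 : Function.update (w M) (2*M) (x (2*M)) = w M := by
            funext j
            rcases eq_or_ne j (2*M) with rfl | hj
            · rw [Function.update_self, hw_eval M _ (fun m hm => by omega)]
            · rw [Function.update_of_ne hj]
          calc f (Function.update (w M) (2*M) (t M))
              = f (Function.update (w M) (2*M) (x (2*M))) :=
                swap2 M (w M) _ _ (htor M) (hxD M)
            _ = f (w M) := by rw [e2]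
            _ = f x := ih
      have hwD : ∀ M, w M ∈ D := by
        intro M m
        rcases lt_or_ge m M with hlt | hge
        · rw [hw_evalset M m hlt]
          exact htor m
        · rw [hw_eval M _ (fun m' hm' => by omega)]
          exact hxD m
      set E : ℕ → Set (∀ j, X j) :=
        fun M => f ⁻¹' {f x} ∩ D ∩ {x' | ∀ m, m < M → x' (2*m) = t m} with hE
      have hEcl : ∀ M, IsClosed (E M) := by
        intro M
        refine IsClosed.inter (IsClosed.inter (isClosed_singleton.preimage hfc) hDcl) ?_
        have : {x' : ∀ j, X j | ∀ m, m < M → x' (2*m) = t m} =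
            ⋂ m, ⋂ (_ : m < M), (fun x' : ∀ j, X j => x' (2*m)) ⁻¹' {t m} := by
          ext x'; simp [Set.mem_iInter]
        rw [this]
        exact isClosed_iInter fun m => isClosed_iInter fun _ =>
          isClosed_singleton.preimage (continuous_apply _)
      have hEdec : ∀ M, E (M+1) ⊆ E M := by
        intro M x' hx'
        exact ⟨hx'.1, fun m hm => hx'.2 m (by omega)⟩
      have hEne : ∀ M, (E M).Nonempty := fun M =>
        ⟨w M, ⟨⟨hfw M, hwD M⟩, fun m hm => hw_evalset M m hm⟩⟩
      obtain ⟨x', hx'⟩ := IsCompact.nonempty_iInter_of_sequence_nonempty_isCompact_isClosed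
        E hEdec hEne ((hEcl 0).isCompact) hEcl
      have hx'M := Set.mem_iInter.1 hx'
      refine ⟨x', ⟨(hx'M 0).1.1, (hx'M 0).1.2⟩, ?_⟩
      funext m
      have h1 : x' (2*m) = t m := (hx'M (m+1)).2 m (Nat.lt_succ_self m)
      simp only [hφ]
      cases hσ : σ m
      · rw [if_neg]
        rw [h1, ht]
        simp only [hσ, if_false, Bool.false_eq_true]
        exact hab m
      · rw [if_pos]
        rw [h1, ht]
        simp [hσ]
    have hQunc : ¬ Q.Countable := by
      intro hQc
      have h1 : (g '' D).Countable := finer_image_countable hfin (by rwa [← hQdef])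
      set x₀ : ∀ j, X j := fun j => dite (∃ m, 2*m = j)
        (fun hj => hj.choose_spec ▸ a hj.choose) (fun _ => (hXne j).some) with hx₀
      have keyA : ∀ (mm m' : ℕ) (e : 2*m' = 2*mm), (e ▸ a m' : X (2*mm)) = a mm := by
        intro mm m' e
        have : m' = mm := by omega
        subst this
        rfl
      have hx₀even : ∀ m, x₀ (2*m) = a m := by
        intro m
        have hj : ∃ m', 2*m' = 2*m := ⟨m, rfl⟩
        simp only [hx₀, dif_pos hj]
        exact keyA m hj.choose hj.choose_spec
      set v : (ℕ → Bool) → ∀ j, X j := fun τ j => dite (∃ m, 2*m+1 = j)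
        (fun hj => hj.choose_spec ▸ (if τ hj.choose then q (2*hj.choose+1) else p (2*hj.choose+1)))
        (fun _ => x₀ j) with hv
      have keyB : ∀ (τ : ℕ → Bool) (mm m' : ℕ) (e : 2*m'+1 = 2*mm+1),
          (e ▸ (if τ m' then q (2*m'+1) else p (2*m'+1)) : X (2*mm+1)) =
          (if τ mm then q (2*mm+1) else p (2*mm+1)) := by
        intro τ mm m' e
        have : m' = mm := by omega
        subst this
        rfl
      have hvodd : ∀ τ m, v τ (2*m+1) = if τ m then q (2*m+1) else p (2*m+1) := by
        intro τ m
        have hj : ∃ m', 2*m'+1 = 2*m+1 := ⟨m, rfl⟩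
        simp only [hv, dif_pos hj]
        exact keyB τ m hj.choose hj.choose_spec
      have hveven : ∀ τ m, v τ (2*m) = x₀ (2*m) := by
        intro τ m
        have hj : ¬ ∃ m', 2*m'+1 = 2*m := by
          rintro ⟨m', hm'⟩; omega
        simp only [hv, dif_neg hj]
      have hvD : ∀ τ, v τ ∈ D := by
        intro τ m
        rw [hveven, hx₀even]
        exact Or.inl rfl
      have hginj : Function.Injective (fun τ => g (v τ)) := by
        intro τ τ' hval
        funext m
        by_contra hm
        have hcm := congrFun hval m
        have hval2 : u (2*m+1) (v τ (2*m+1)) = u (2*m+1) (v τ' (2*m+1)) :=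
          congrArg Subtype.val hcm
        rw [hvodd, hvodd] at hval2
        have hval0 : ∀ (c : Bool), u (2*m+1) (if c then q (2*m+1) else p (2*m+1)) =
            if c then 1 else 0 := by
          intro c
          cases c
          · simpa using hu0 (2*m+1) rfl
          · simpa using hu1 (2*m+1) rfl
        rw [hval0, hval0] at hval2
        cases hτ : τ m <;> cases hτ' : τ' m <;> rw [hτ, hτ'] at hval2 hm <;>
          first
            | exact hm rfl
            | norm_num at hval2
      exact uncountable_of_inj_cantor (fun τ => g (v τ)) hginj
        (by rintro _ ⟨τ, rfl⟩; exact ⟨v τ, hvD τ, rfl⟩) h1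
    letI : MetricSpace Y := TopologicalSpace.metrizableSpaceMetric Y
    haveI : SecondCountableTopology Y := inferInstance
    exact hft ⟨D, φ, hDcl, hφc, Q, uncount_not_scattered hQunc, hfib⟩
end

section
/- Let ω₁ be the first uncountable ordinal with its order topology, let 1 ≤ n < ω, and give [ω₁]^n = {(α₁,…,α_n) ∈ ω₁^n : α₁ < ⋯ < α_n} the subspace topology from the product ω₁^n. If B is a Borel subset of [ω₁]^n, then either there is a club C ⊆ ω₁ with [C]^n ⊆ B, or there is a club C ⊆ ω₁ with [C]^n ∩ B = ∅. -/
open Set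

noncomputable section

/-- The first uncountable ordinal. -/
def omega1 : Ordinal.{0} := (Cardinal.aleph 1).ord

/-- `ω₁` as a linearly ordered set: the set of ordinals below `ω₁`. -/
abbrev Omega1 : Type 1 := ↥(Set.Iio omega1)

/-- The order topology on `ω₁`. -/
instance : TopologicalSpace Omega1 := Preorder.topology Omega1

instance : OrderTopology Omega1 := ⟨rfl⟩

/-- A club in `ω₁` : a subset closed in the order topology and unbounded. -/
def IsClubIn (C : Set Omega1) : Prop :=
  IsClosed C ∧ ∀ x : Omega1, ∃ y ∈ C, x ≤ y

lemma omega1_isLimit : Order.IsSuccLimit omega1 := Cardinal.isSuccLimit_ord (Cardinal.aleph0_le_aleph 1)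

/-- successor inside ω₁ -/
def osucc (x : Omega1) : Omega1 := ⟨Order.succ x.1, omega1_isLimit.succ_lt x.2⟩

lemma lt_osucc (x : Omega1) : x < osucc x := by
  change x.1 < Order.succ x.1
  exact Order.lt_succ x.1

lemma lt_osucc_iff {x y : Omega1} : x < osucc y ↔ x ≤ y := by
  change x.1 < Order.succ y.1 ↔ x.1 ≤ y.1
  exact Order.lt_succ_iff

lemma omega1_zero_mem : (0 : Ordinal) < omega1 := omega1_isLimit.pos

lemma countable_lt_subtype (γ : Omega1) : Countable {a : Omega1 // a < γ} := by
  have h1 : Cardinal.mk (Set.Iio γ.1) = Cardinal.lift.{1} (γ.1).card := Ordinal.mk_Iio_ordinal γ.1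
  have h2 : (γ.1).card < Cardinal.aleph 1 := Cardinal.lt_ord.mp γ.2
  have h3 : (γ.1).card ≤ Cardinal.aleph0 := by
    rwa [← Cardinal.succ_aleph0, Order.lt_succ_iff] at h2
  have h4 : Countable (Set.Iio γ.1) := by
    rw [← Cardinal.mk_le_aleph0_iff, h1, ← Cardinal.lift_aleph0.{1,0}]
    exact Cardinal.lift_le.mpr h3
  refine Function.Injective.countable
    (f := fun a : {a : Omega1 // a < γ} => (⟨a.1.1, a.2⟩ : Set.Iio γ.1)) ?_
  intro a b hab
  simp only [Subtype.mk.injEq] at hab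
  apply Subtype.ext; apply Subtype.ext; exact congrArg (fun x : Set.Iio γ.1 => x.1) hab

/-- Any countable family in ω₁ is bounded. -/
lemma exists_bound {ι : Type*} [Countable ι] (f : ι → Omega1) : ∃ b : Omega1, ∀ i, f i ≤ b := by
  rcases isEmpty_or_nonempty ι with h | h
  · exact ⟨⟨0, omega1_zero_mem⟩, fun i => isEmptyElim i⟩
  · obtain ⟨g, hg⟩ := exists_surjective_nat ι
    have hsup : (⨆ k : ℕ, (f (g k)).1) < omega1 := by
      refine Cardinal.iSup_lt_ord_lift_of_isRegular Cardinal.isRegular_aleph_one ?_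
        (fun k => (f (g k)).2)
      simpa using Cardinal.aleph0_lt_aleph_one
    refine ⟨⟨_, hsup⟩, fun i => ?_⟩
    obtain ⟨k, rfl⟩ := hg i
    have hbdd : BddAbove (range fun k : ℕ => (f (g k)).1) :=
      ⟨omega1, by rintro _ ⟨k, rfl⟩; exact (f (g k)).2.le⟩
    exact le_ciSup hbdd k

lemma exists_isLUB {S : Set Omega1} (hne : S.Nonempty) {b : Omega1} (hb : b ∈ upperBounds S) :
    ∃ δ : Omega1, IsLUB S δ := by
  have hne' : (Subtype.val '' S).Nonempty := hne.image _
  have hbdd : BddAbove (Subtype.val '' S) := by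
    refine ⟨b.1, ?_⟩; rintro _ ⟨x, hx, rfl⟩; exact hb hx
  have hlt : sSup (Subtype.val '' S) < omega1 :=
    lt_of_le_of_lt (csSup_le hne' (fun o ho => by
      rcases ho with ⟨x, hx, rfl⟩; exact hb hx)) b.2
  refine ⟨⟨_, hlt⟩, ?_, ?_⟩
  · intro x hx
    exact le_csSup hbdd ⟨x, hx, rfl⟩
  · intro c hc
    change sSup _ ≤ c.1
    exact csSup_le hne' (fun o ho => by rcases ho with ⟨x, hx, rfl⟩; exact hc hx)

lemma mem_of_isLUB_subset {C T : Set Omega1} (hC : IsClosed C) (hTC : T ⊆ C)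
    (hne : T.Nonempty) {δ : Omega1} (h : IsLUB T δ) : δ ∈ C :=
  hC.closure_subset (closure_mono hTC (h.mem_closure hne))

section
open Set

/-- closure points not in the set are approached from below within any neighborhood -/
lemma exists_lt_mem_of_closure {s : Set Omega1} {δ : Omega1} (h : δ ∈ closure s) (hn : δ ∉ s)
    {V : Set Omega1} (hV : V ∈ nhds δ) : ∃ α ∈ s, α < δ ∧ α ∈ V := by
  have hW : V ∩ Iio (osucc δ) ∈ nhds δ :=
    Filter.inter_mem hV (IsOpen.mem_nhds isOpen_Iio (lt_osucc δ))
  obtain ⟨α, ⟨hαV, hαlt⟩, hαs⟩ := mem_closure_iff_nhds.mp h _ hW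
  have hle : α ≤ δ := lt_osucc_iff.mp hαlt
  exact ⟨α, hαs, lt_of_le_of_ne hle (fun e => hn (e ▸ hαs)), hαV⟩

/-- Countable intersections of clubs are clubs. -/
lemma isClubIn_iInter {C : ℕ → Set Omega1} (h : ∀ k, IsClubIn (C k)) :
    IsClubIn (⋂ k, C k) := by
  constructor
  · exact isClosed_iInter fun k => (h k).1
  · intro x
    choose g hg1 hg2 using fun k => (h k).2
    choose bnd hbnd using fun f : ℕ → Omega1 => exists_bound f
    set F : Omega1 → Omega1 := fun y => osucc (max y (bnd (fun k => g k y))) with hF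
    have hFy : ∀ y, y < F y := fun y => lt_of_le_of_lt (le_max_left _ _) (lt_osucc _)
    have hFg : ∀ y k, g k y < F y := fun y k =>
      lt_of_le_of_lt (le_trans (hbnd _ k) (le_max_right _ _)) (lt_osucc _)
    set xs : ℕ → Omega1 := fun m => F^[m] x with hxs
    have hxs_succ : ∀ m, xs (m+1) = F (xs m) := fun m => Function.iterate_succ_apply' F m x
    have hmono : StrictMono xs := strictMono_nat_of_lt_succ (fun m => by
      rw [hxs_succ]; exact hFy _)
    obtain ⟨b, hb⟩ := exists_bound xs
    obtain ⟨δ, hδ⟩ := exists_isLUB (S := range xs) ⟨x, 0, rfl⟩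
      (by rintro _ ⟨m, rfl⟩; exact hb m)
    have hxsle : ∀ m, xs m ≤ δ := fun m => hδ.1 ⟨m, rfl⟩
    refine ⟨δ, ?_, ?_⟩
    · refine mem_iInter.mpr fun k => ?_
      refine mem_of_isLUB_subset (h k).1 (T := range (fun m => g k (xs m)))
        (by rintro _ ⟨m, rfl⟩; exact hg1 k _) ⟨_, 0, rfl⟩ ⟨?_, ?_⟩
      · rintro _ ⟨m, rfl⟩
        refine le_trans (le_of_lt ?_) (hxsle (m+1))
        show g k (xs m) < xs (m + 1)
        rw [hxs_succ]; exact hFg (xs m) k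
      · intro c hc
        refine hδ.2 ?_
        rintro _ ⟨m, rfl⟩
        exact le_trans (hg2 k (xs m)) (hc ⟨m, rfl⟩)
    · exact hδ.1 ⟨0, rfl⟩

/-- Diagonal intersection. -/
def diagInter (C : Omega1 → Set Omega1) : Set Omega1 := ⋂ α, (Iic α ∪ C α)

lemma mem_diagInter {C : Omega1 → Set Omega1} {δ : Omega1} :
    δ ∈ diagInter C ↔ ∀ α, α < δ → δ ∈ C α := by
  simp only [diagInter, mem_iInter, mem_union, mem_Iic]
  constructor
  · intro h α hα
    rcases h α with h' | h'
    · exact absurd hα (not_lt.mpr h')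
    · exact h'
  · intro h α
    rcases le_or_gt δ α with h' | h'
    · exact Or.inl h'
    · exact Or.inr (h α h')

lemma isClubIn_diagInter {C : Omega1 → Set Omega1} (h : ∀ α, IsClubIn (C α)) :
    IsClubIn (diagInter C) := by
  constructor
  · exact isClosed_iInter fun α => IsClosed.union isClosed_Iic (h α).1
  · intro x
    choose g hg1 hg2 using fun α => (h α).2
    have : ∀ y : Omega1, ∃ b : Omega1, ∀ a : {a : Omega1 // a < y}, g a.1 y ≤ b := by
      intro y
      haveI := countable_lt_subtype y
      exact exists_bound (fun a : {a : Omega1 // a < y} => g a.1 y)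
    choose bnd hbnd using this
    set F : Omega1 → Omega1 := fun y => osucc (max y (bnd y)) with hF
    have hFy : ∀ y, y < F y := fun y => lt_of_le_of_lt (le_max_left _ _) (lt_osucc _)
    have hFg : ∀ y (a : Omega1), a < y → g a y < F y := fun y a ha =>
      lt_of_le_of_lt (le_trans (hbnd y ⟨a, ha⟩) (le_max_right _ _)) (lt_osucc _)
    set xs : ℕ → Omega1 := fun m => F^[m] x with hxs
    have hxs_succ : ∀ m, xs (m+1) = F (xs m) := fun m => Function.iterate_succ_apply' F m x
    have hmono : StrictMono xs := strictMono_nat_of_lt_succ (fun m => by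
      rw [hxs_succ]; exact hFy _)
    obtain ⟨b, hb⟩ := exists_bound xs
    obtain ⟨δ, hδ⟩ := exists_isLUB (S := range xs) ⟨x, 0, rfl⟩
      (by rintro _ ⟨m, rfl⟩; exact hb m)
    have hxsle : ∀ m, xs m ≤ δ := fun m => hδ.1 ⟨m, rfl⟩
    refine ⟨δ, mem_diagInter.mpr fun α hα => ?_, hδ.1 ⟨0, rfl⟩⟩
    obtain ⟨m, hm⟩ : ∃ m, α < xs m := by
      by_contra hc
      push_neg at hc
      exact absurd (hδ.2 (by rintro _ ⟨m, rfl⟩; exact hc m)) (not_le.mpr hα)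
    have hmle : ∀ j, α < xs (m + j) := fun j =>
      lt_of_lt_of_le hm (hmono.monotone (Nat.le_add_right m j))
    refine mem_of_isLUB_subset (h α).1 (T := range (fun j => g α (xs (m + j))))
      (by rintro _ ⟨j, rfl⟩; exact hg1 α _) ⟨_, 0, rfl⟩ ⟨?_, ?_⟩
    · rintro _ ⟨j, rfl⟩
      refine le_trans (le_of_lt ?_) (hxsle (m + j + 1))
      show g α (xs (m + j)) < xs (m + j + 1)
      rw [hxs_succ]
      exact hFg _ _ (hmle j)
    · intro c hc
      refine hδ.2 ?_
      rintro _ ⟨i, rfl⟩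
      calc xs i ≤ xs (m + i) := hmono.monotone (Nat.le_add_left i m)
        _ ≤ g α (xs (m + i)) := hg2 α _
        _ ≤ c := hc ⟨i, rfl⟩

section
open Set

lemma strictMono_cons {n : ℕ} {α : Omega1} {w : Fin n → Omega1} (hw : StrictMono w)
    (hα : ∀ i, α < w i) : StrictMono (Fin.cons α w) := by
  rw [Fin.strictMono_iff_lt_succ]
  intro i
  rw [Fin.cons_succ]
  rcases Fin.eq_zero_or_eq_succ (Fin.castSucc i) with h | ⟨j, hj⟩
  · rw [h, Fin.cons_zero]
    exact hα i
  · rw [hj, Fin.cons_succ]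
    apply hw
    have hval : (i : ℕ) = (j : ℕ) + 1 := by simpa using congrArg Fin.val hj
    simp [Fin.lt_def, hval]

lemma continuous_cons_left {n : ℕ} (w : Fin n → Omega1) :
    Continuous (fun t : Omega1 => (Fin.cons t w : Fin (n+1) → Omega1)) := by
  apply continuous_pi
  intro i
  refine Fin.cases ?_ ?_ i
  · simpa using continuous_id'
  · intro j
    simpa using continuous_const

lemma continuous_cons_right {n : ℕ} (α : Omega1) :
    Continuous (fun w : Fin n → Omega1 => (Fin.cons α w : Fin (n+1) → Omega1)) := by
  apply continuous_pi
  intro i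
  refine Fin.cases ?_ ?_ i
  · simpa using continuous_const
  · intro j
    simpa using continuous_apply j

lemma tail_strictMono {n : ℕ} {v : Fin (n+1) → Omega1} (hv : StrictMono v) :
    StrictMono (Fin.tail v) := fun i j hij => hv (Fin.succ_lt_succ_iff.mpr hij)

lemma exists_tuple_above {D : Set Omega1} (hD : ∀ x : Omega1, ∃ y ∈ D, x ≤ y) :
    ∀ (n : ℕ) (δ : Omega1), ∃ w : Fin n → Omega1,
      StrictMono w ∧ (∀ i, w i ∈ D) ∧ (∀ i, δ < w i) := by
  intro n
  induction n with
  | zero => exact fun δ => ⟨Fin.elim0, fun a => a.elim0, fun i => i.elim0, fun i => i.elim0⟩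
  | succ m ih =>
    intro δ
    obtain ⟨y, hyD, hy⟩ := hD (osucc δ)
    have hδy : δ < y := lt_of_lt_of_le (lt_osucc δ) hy
    obtain ⟨w, hw, hwD, hwy⟩ := ih y
    refine ⟨Fin.cons y w, strictMono_cons hw hwy, ?_, ?_⟩
    · intro i
      refine Fin.cases ?_ ?_ i
      · simpa using hyD
      · intro j; simpa using hwD j
    · intro i
      refine Fin.cases ?_ ?_ i
      · simpa using hδy
      · intro j; simpa using lt_trans hδy (hwy j)

section
open Set

lemma open_clubHomog : ∀ (n : ℕ) (U : Set {v : Fin n → Omega1 // StrictMono v}),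
    IsOpen U →
    ∃ C : Set Omega1, IsClubIn C ∧
      ((∀ v : {v : Fin n → Omega1 // StrictMono v}, (∀ i, v.1 i ∈ C) → v ∈ U) ∨
       (∀ v : {v : Fin n → Omega1 // StrictMono v}, (∀ i, v.1 i ∈ C) → v ∉ U)) := by
  intro n
  induction n with
  | zero =>
    intro U _
    have huniv : IsClubIn (univ : Set Omega1) := ⟨isClosed_univ, fun x => ⟨x, mem_univ x, le_rfl⟩⟩
    have helt : ∀ v v' : {v : Fin 0 → Omega1 // StrictMono v}, v = v' :=
      fun v v' => Subtype.ext (funext fun i => i.elim0)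
    by_cases h : ∃ v : {v : Fin 0 → Omega1 // StrictMono v}, v ∈ U
    · obtain ⟨v0, hv0⟩ := h
      exact ⟨univ, huniv, Or.inl (fun v _ => helt v v0 ▸ hv0)⟩
    · push_neg at h
      exact ⟨univ, huniv, Or.inr (fun v _ => h v)⟩
  | succ m ih =>
    intro U hU
    obtain ⟨Ut, hUt, hpre⟩ := isOpen_induced_iff.mp hU
    have hVopen : ∀ α : Omega1, IsOpen {w : {v : Fin m → Omega1 // StrictMono v} |
        (∀ i, α < w.1 i) → Fin.cons α w.1 ∈ Ut} := by
      intro α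
      have heq : {w : {v : Fin m → Omega1 // StrictMono v} |
          (∀ i, α < w.1 i) → Fin.cons α w.1 ∈ Ut}
          = {w : {v : Fin m → Omega1 // StrictMono v} | ¬ ∀ i, α < w.1 i}
            ∪ {w | Fin.cons α w.1 ∈ Ut} := by
        ext w
        simp [imp_iff_not_or]
      rw [heq]
      apply IsOpen.union
      · have heq2 : {w : {v : Fin m → Omega1 // StrictMono v} | ¬ ∀ i, α < w.1 i}
            = ⋃ i, (fun w : {v : Fin m → Omega1 // StrictMono v} => w.1 i) ⁻¹' Iio (osucc α) := by
          ext w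
          simp only [mem_setOf_eq, not_forall, not_lt, mem_iUnion, mem_preimage, mem_Iio]
          constructor
          · rintro ⟨i, hi⟩; exact ⟨i, lt_osucc_iff.mpr hi⟩
          · rintro ⟨i, hi⟩; exact ⟨i, lt_osucc_iff.mp hi⟩
        rw [heq2]
        exact isOpen_iUnion fun i =>
          IsOpen.preimage ((continuous_apply i).comp continuous_subtype_val) isOpen_Iio
      · exact IsOpen.preimage ((continuous_cons_right α).comp continuous_subtype_val) hUt
    choose Cs hCs hHom using fun α => ih _ (hVopen α)
    have hDclub : IsClubIn (diagInter Cs) := isClubIn_diagInter hCs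
    set A1 : Set Omega1 := {α | ∀ w : {v : Fin m → Omega1 // StrictMono v},
      (∀ i, w.1 i ∈ Cs α) → (∀ i, α < w.1 i) → Fin.cons α w.1 ∈ Ut} with hA1
    have hfact0 : ∀ α ∉ A1, ∀ w : {v : Fin m → Omega1 // StrictMono v},
        (∀ i, w.1 i ∈ Cs α) → (∀ i, α < w.1 i) → Fin.cons α w.1 ∉ Ut := by
      intro α hα w hwC hwα hmem
      rcases hHom α with h | h
      · exact hα (fun w' hw'C hw'α => (h w' hw'C) hw'α)
      · exact (h w hwC) (fun _ => hmem)
    have hA0closed : IsClosed (diagInter Cs \ A1) := by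
      apply isClosed_of_closure_subset
      intro δ hδ
      have hδD : δ ∈ diagInter Cs := hDclub.1.closure_subset (closure_mono diff_subset hδ)
      refine ⟨hδD, ?_⟩
      intro hδA1
      have hδnot : δ ∉ diagInter Cs \ A1 := fun h => h.2 hδA1
      obtain ⟨w, hw, hwD, hwδ⟩ := exists_tuple_above hDclub.2 m δ
      have hconsmem : Fin.cons δ w ∈ Ut :=
        hδA1 ⟨w, hw⟩ (fun i => mem_diagInter.mp (hwD i) δ (hwδ i)) hwδ
      have hnb : (fun t : Omega1 => (Fin.cons t w : Fin (m+1) → Omega1)) ⁻¹' Ut ∈ nhds δ :=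
        (IsOpen.preimage (continuous_cons_left w) hUt).mem_nhds hconsmem
      obtain ⟨α, hαA0, hαδ, hαV⟩ := exists_lt_mem_of_closure hδ hδnot hnb
      exact hfact0 α hαA0.2 ⟨w, hw⟩
        (fun i => mem_diagInter.mp (hwD i) α (lt_trans hαδ (hwδ i)))
        (fun i => lt_trans hαδ (hwδ i)) hαV
    by_cases hbd : ∃ β : Omega1, ∀ a ∈ diagInter Cs \ A1, a ≤ β
    · obtain ⟨β, hβ⟩ := hbd
      refine ⟨diagInter Cs ∩ Ici (osucc β), ⟨hDclub.1.inter isClosed_Ici, ?_⟩, Or.inl ?_⟩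
      · intro x
        obtain ⟨y, hyD, hy⟩ := hDclub.2 (max x (osucc β))
        exact ⟨y, ⟨hyD, le_trans (le_max_right _ _) hy⟩, le_trans (le_max_left _ _) hy⟩
      · intro v hv
        have hα1 : v.1 0 ∈ A1 := by
          by_contra hc
          have hmem : v.1 0 ∈ diagInter Cs \ A1 := ⟨(hv 0).1, hc⟩
          exact absurd (lt_of_lt_of_le (lt_osucc β) (hv 0).2) (not_lt.mpr (hβ _ hmem))
        have htail : Fin.cons (v.1 0) (Fin.tail v.1) ∈ Ut := by
          refine hα1 ⟨Fin.tail v.1, tail_strictMono v.2⟩ ?_ ?_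
          · exact fun i => mem_diagInter.mp (hv i.succ).1 (v.1 0) (v.2 (Fin.succ_pos i))
          · exact fun i => v.2 (Fin.succ_pos i)
        rw [← hpre]
        show v.1 ∈ Ut
        rw [← Fin.cons_self_tail v.1]
        exact htail
    · push_neg at hbd
      refine ⟨diagInter Cs \ A1, ⟨hA0closed, ?_⟩, Or.inr ?_⟩
      · intro x
        obtain ⟨a, haA, hxa⟩ := hbd x
        exact ⟨a, haA, le_of_lt hxa⟩
      · intro v hv hvU
        refine hfact0 (v.1 0) (hv 0).2 ⟨Fin.tail v.1, tail_strictMono v.2⟩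
          (fun i => mem_diagInter.mp (hv i.succ).1 (v.1 0) (v.2 (Fin.succ_pos i)))
          (fun i => v.2 (Fin.succ_pos i)) ?_
        show Fin.cons (v.1 0) (Fin.tail v.1) ∈ Ut
        rw [Fin.cons_self_tail v.1]
        rw [← hpre] at hvU
        exact hvU

section
open Set

/-- If `B` is a Borel subset of `[ω₁]^n` (the space of strictly increasing `n`-tuples from
`ω₁`, with the subspace topology from the product), then there is a club `C ⊆ ω₁` with
`[C]^n ⊆ B`, or there is a club `C ⊆ ω₁` with `[C]^n ∩ B = ∅`. -/
theorem stmt15 (n : ℕ) (hn : 1 ≤ n)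
    (B : Set {v : Fin n → Omega1 // StrictMono v})
    (hB : @MeasurableSet _ (borel {v : Fin n → Omega1 // StrictMono v}) B) :
    (∃ C : Set Omega1, IsClubIn C ∧
      ∀ v : {v : Fin n → Omega1 // StrictMono v}, (∀ i, v.1 i ∈ C) → v ∈ B) ∨
    (∃ C : Set Omega1, IsClubIn C ∧
      ∀ v : {v : Fin n → Omega1 // StrictMono v}, (∀ i, v.1 i ∈ C) → v ∉ B) := by
  have huniv : IsClubIn (univ : Set Omega1) := ⟨isClosed_univ, fun x => ⟨x, mem_univ x, le_rfl⟩⟩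
  have hB' : @MeasurableSet _ (MeasurableSpace.generateFrom
      {s : Set {v : Fin n → Omega1 // StrictMono v} | IsOpen s}) B := hB
  refine MeasurableSpace.generateFrom_induction
    (C := {s : Set {v : Fin n → Omega1 // StrictMono v} | IsOpen s})
    (p := fun s _ =>
      (∃ C : Set Omega1, IsClubIn C ∧
        ∀ v : {v : Fin n → Omega1 // StrictMono v}, (∀ i, v.1 i ∈ C) → v ∈ s) ∨
      (∃ C : Set Omega1, IsClubIn C ∧
        ∀ v : {v : Fin n → Omega1 // StrictMono v}, (∀ i, v.1 i ∈ C) → v ∉ s))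
    ?_ ?_ ?_ ?_ B hB'
  · intro t ht _
    obtain ⟨C, hC, h⟩ := open_clubHomog n t ht
    rcases h with h | h
    · exact Or.inl ⟨C, hC, h⟩
    · exact Or.inr ⟨C, hC, h⟩
  · exact Or.inr ⟨univ, huniv, fun v _ h => h⟩
  · rintro t _ (⟨C, hC, h⟩ | ⟨C, hC, h⟩)
    · exact Or.inr ⟨C, hC, fun v hv hc => hc (h v hv)⟩
    · exact Or.inl ⟨C, hC, fun v hv => h v hv⟩
  · intro f _ hf
    by_cases hex : ∃ k, ∃ C : Set Omega1, IsClubIn C ∧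
        ∀ v : {v : Fin n → Omega1 // StrictMono v}, (∀ i, v.1 i ∈ C) → v ∈ f k
    · obtain ⟨k, C, hC, h⟩ := hex
      exact Or.inl ⟨C, hC, fun v hv => mem_iUnion.mpr ⟨k, h v hv⟩⟩
    · push_neg at hex
      have hall : ∀ k, ∃ C : Set Omega1, IsClubIn C ∧
          ∀ v : {v : Fin n → Omega1 // StrictMono v}, (∀ i, v.1 i ∈ C) → v ∉ f k := by
        intro k
        rcases hf k with h | h
        · obtain ⟨C, hC, hin⟩ := h
          obtain ⟨v, hv, hnin⟩ := hex k C hC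
          exact absurd (hin v hv) hnin
        · exact h
      choose Cs hCs hout using hall
      refine Or.inr ⟨⋂ k, Cs k, isClubIn_iInter hCs, ?_⟩
      intro v hv hvU
      obtain ⟨k, hk⟩ := mem_iUnion.mp hvU
      exact hout k v (fun i => mem_iInter.mp (hv i) k) hk

end
end
end
end
end
end

section
/- Let X, Y be compact Hausdorff spaces, let f : X → Y be a tight continuous map, let μ be a Radon measure on X, and let ν = μ ∘ f⁻¹ be the pushforward measure on Y (ν(B) = μ(f⁻¹(B))). Suppose ν is atomless. Then X is skinny with respect to f and μ; that is, μ(K) = ν(f(K)) for every closed K ⊆ X. -/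
open Set Topology

universe u

open MeasureTheory

open MeasureTheory in
lemma aux_nonscattered {X Y : Type u}
    [TopologicalSpace X] [CompactSpace X] [T2Space X]
    [MeasurableSpace X] [BorelSpace X]
    [TopologicalSpace Y] [CompactSpace Y] [T2Space Y]
    [MeasurableSpace Y] [BorelSpace Y]
    (f : X → Y) (hf : Continuous f)
    (μ : Measure X) [IsFiniteMeasure μ] [μ.Regular]
    (hsing : ∀ y : Y, μ (f ⁻¹' {y}) = 0)
    (S : Set Y) (hS : IsCompact S) (hpos : 0 < μ (f ⁻¹' S)) :
    ¬ IsScatteredSet S := by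
  intro hsc
  set 𝒰 : Set (Set Y) := {U | IsOpen U ∧ μ (f ⁻¹' (U ∩ S)) = 0} with h𝒰
  set W := ⋃₀ 𝒰 with hW
  have hWopen : IsOpen W := isOpen_sUnion (fun U hU => hU.1)
  have hWS0 : μ (f ⁻¹' (W ∩ S)) = 0 := by
    by_contra h0
    have hm : MeasurableSet (f ⁻¹' (W ∩ S)) :=
      hf.measurable (hWopen.measurableSet.inter hS.isClosed.measurableSet)
    obtain ⟨C, hCsub, hCcomp, hCpos⟩ :=
      hm.exists_lt_isCompact (pos_iff_ne_zero.mpr h0)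
    have himgC : f '' C ⊆ W ∩ S :=
      (image_mono hCsub).trans (image_preimage_subset f _)
    have hcov : f '' C ⊆ ⋃ U : 𝒰, (U : Set Y) := by
      intro y hy
      obtain ⟨U, hU, hyU⟩ := (himgC hy).1
      exact mem_iUnion.mpr ⟨⟨U, hU⟩, hyU⟩
    obtain ⟨t, ht⟩ := (hCcomp.image hf).elim_finite_subcover
      (fun U : 𝒰 => (U : Set Y)) (fun U => U.2.1) hcov
    have hle : μ C ≤ μ (⋃ U ∈ t, f ⁻¹' ((U : Set Y) ∩ S)) := by
      apply measure_mono
      intro x hx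
      have hfx : f x ∈ ⋃ U ∈ t, (U : Set Y) := ht (mem_image_of_mem f hx)
      obtain ⟨U, hUt, hfU⟩ := mem_iUnion₂.mp hfx
      exact mem_iUnion₂.mpr ⟨U, hUt, hfU, (hCsub hx).2⟩
    have hz : μ (⋃ U ∈ t, f ⁻¹' ((U : Set Y) ∩ S)) = 0 :=
      (measure_biUnion_null_iff t.countable_toSet).mpr (fun U _ => U.2.2)
    exact (hCpos.trans_le (hle.trans hz.le)).false
  have hT : 0 < μ (f ⁻¹' (S \ W)) := by
    by_contra h
    push_neg at h
    have h0 : μ (f ⁻¹' (S \ W)) = 0 := le_antisymm h (zero_le)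
    have hsub : f ⁻¹' S ⊆ f ⁻¹' (S \ W) ∪ f ⁻¹' (W ∩ S) := by
      intro x hx
      by_cases hxW : f x ∈ W
      · exact Or.inr ⟨hxW, hx⟩
      · exact Or.inl ⟨hx, hxW⟩
    have := (measure_mono hsub).trans
      (measure_union_le (μ := μ) (f ⁻¹' (S \ W)) (f ⁻¹' (W ∩ S)))
    rw [h0, hWS0, add_zero] at this
    exact (hpos.trans_le this).false
  have hne : (S \ W).Nonempty := by
    rcases (f ⁻¹' (S \ W)).eq_empty_or_nonempty with h | h
    · rw [h] at hT; simp at hT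
    · obtain ⟨x, hx⟩ := h; exact ⟨f x, hx⟩
  obtain ⟨y, hyT, U, hUopen, hUT⟩ := hsc (S \ W) diff_subset hne
  have hU0 : μ (f ⁻¹' (U ∩ S)) = 0 := by
    have hsub : U ∩ S ⊆ {y} ∪ (W ∩ S) := by
      rintro z ⟨hzU, hzS⟩
      by_cases hzW : z ∈ W
      · exact Or.inr ⟨hzW, hzS⟩
      · exact Or.inl (hUT ▸ (⟨hzU, hzS, hzW⟩ : z ∈ U ∩ (S \ W)))
    have : μ (f ⁻¹' (U ∩ S)) ≤ μ (f ⁻¹' {y}) + μ (f ⁻¹' (W ∩ S)) := by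
      refine (measure_mono ?_).trans
        (measure_union_le (μ := μ) (f ⁻¹' {y}) (f ⁻¹' (W ∩ S)))
      intro x hx
      rcases hsub hx with h | h
      · exact Or.inl h
      · exact Or.inr h
    rw [hsing y, hWS0, add_zero] at this
    exact le_antisymm this (zero_le)
  have hyU : y ∈ U := by
    have : y ∈ U ∩ (S \ W) := hUT ▸ rfl
    exact this.1
  exact hyT.2 ⟨U, ⟨hUopen, hU0⟩, hyU⟩


/-- If `f : X → Y` is a tight continuous map of compact Hausdorff spaces, `μ` is a Radon
measure on `X`, and the pushforward `ν = μ ∘ f⁻¹` is atomless, then `X` is skinny with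
respect to `f` and `μ` : `μ K = ν (f '' K)` for every closed `K ⊆ X`. -/
theorem stmt19 {X Y : Type u}
    [TopologicalSpace X] [CompactSpace X] [T2Space X]
    [MeasurableSpace X] [BorelSpace X]
    [TopologicalSpace Y] [CompactSpace Y] [T2Space Y]
    [MeasurableSpace Y] [BorelSpace Y]
    (f : X → Y) (hf : Continuous f) (htight : IsTight f)
    (μ : Measure X) [IsFiniteMeasure μ] [μ.Regular]
    (hatomless : ∀ A : Set Y, MeasurableSet A → 0 < μ.map f A →
      ∃ B ⊆ A, MeasurableSet B ∧ 0 < μ.map f B ∧ μ.map f B < μ.map f A) :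
    ∀ K : Set X, IsClosed K → μ K = μ.map f (f '' K) := by
  intro K hK
  have hKc : IsCompact K := hK.isCompact
  have hfK : IsClosed (f '' K) := (hKc.image hf).isClosed
  rw [Measure.map_apply hf.measurable hfK.measurableSet]
  refine le_antisymm (measure_mono (subset_preimage_image f K)) ?_
  by_contra hcon
  push_neg at hcon
  have hsing : ∀ y : Y, μ (f ⁻¹' {y}) = 0 := by
    intro y
    by_contra h0
    have hposy : 0 < μ.map f {y} := by
      rw [Measure.map_apply hf.measurable (measurableSet_singleton y)]
      exact pos_iff_ne_zero.mpr h0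
    obtain ⟨B, hBsub, hBm, hBpos, hBlt⟩ := hatomless {y} (measurableSet_singleton y) hposy
    rcases subset_singleton_iff_eq.mp hBsub with h | h
    · rw [h] at hBpos; simp at hBpos
    · rw [h] at hBlt; exact lt_irrefl _ hBlt
  have hdiffpos : 0 < μ (f ⁻¹' (f '' K) \ K) := by
    by_contra h
    push_neg at h
    have h0 : μ (f ⁻¹' (f '' K) \ K) = 0 := le_antisymm h (zero_le)
    have hsub : f ⁻¹' (f '' K) ⊆ K ∪ (f ⁻¹' (f '' K) \ K) := by
      intro x hx
      by_cases hxK : x ∈ K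
      · exact Or.inl hxK
      · exact Or.inr ⟨hx, hxK⟩
    have := (measure_mono hsub).trans
      (measure_union_le (μ := μ) K (f ⁻¹' (f '' K) \ K))
    rw [h0, add_zero] at this
    exact absurd this (not_le.mpr hcon)
  have hmeas : MeasurableSet (f ⁻¹' (f '' K) \ K) :=
    (hf.measurable hfK.measurableSet).diff hK.measurableSet
  obtain ⟨C, hCsub, hCcomp, hCpos⟩ := hmeas.exists_lt_isCompact hdiffpos
  have hCne : C.Nonempty := by
    rcases C.eq_empty_or_nonempty with h | h
    · rw [h] at hCpos; simp at hCpos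
    · exact h
  set P1 : Set X := K ∩ f ⁻¹' (f '' C) with hP1
  have hfCclosed : IsClosed (f '' C) := (hCcomp.image hf).isClosed
  have hP1closed : IsClosed P1 := hK.inter (hfCclosed.preimage hf)
  have himg : f '' P1 = f '' C := by
    apply Subset.antisymm
    · rintro y ⟨x, hx, rfl⟩; exact hx.2
    · rintro y ⟨c, hc, rfl⟩
      obtain ⟨k, hk, hfk⟩ := (hCsub hc).1
      exact ⟨k, ⟨hk, by rw [mem_preimage, hfk]; exact mem_image_of_mem f hc⟩, hfk⟩
  have hdisj : Disjoint P1 C := by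
    rw [Set.disjoint_left]
    rintro x ⟨hxK, _⟩ hxC
    exact (hCsub hxC).2 hxK
  have hPne : P1 ≠ C := by
    intro h
    obtain ⟨c, hc⟩ := hCne
    exact (hCsub hc).2 (h ▸ hc : c ∈ P1).1
  have hnsc : ¬ IsScatteredSet (f '' C) :=
    aux_nonscattered f hf μ hsing (f '' C) (hCcomp.image hf)
      (hCpos.trans_le (measure_mono (subset_preimage_image f C)))
  apply htight
  refine ⟨{P1, C}, ⟨?_, ?_, f '' C, hnsc, ?_⟩, ?_⟩
  · intro a ha b hb hab
    rcases ha with rfl | ha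
    · rcases hb with rfl | hb
      · exact absurd rfl hab
      · rw [mem_singleton_iff] at hb; subst hb; exact hdisj
    · rw [mem_singleton_iff] at ha; subst ha
      rcases hb with rfl | hb
      · exact hdisj.symm
      · rw [mem_singleton_iff] at hb; subst hb; exact absurd rfl hab
  · rintro P hP
    rcases hP with rfl | hP
    · exact hP1closed
    · rw [mem_singleton_iff] at hP; subst hP; exact hCcomp.isClosed
  · rintro P hP
    rcases hP with rfl | hP
    · exact himg
    · rw [mem_singleton_iff] at hP; subst hP; rfl
  · rw [Cardinal.mk_insert (by simpa using hPne), Cardinal.mk_singleton, one_add_one_eq_two]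
end
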